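/- arXiv:1106.6002 — 4 statements merged into one kernel-verified Lean document; each statement's English description precedes it below -/
import Mathlib

section
/- Let ξ_n > 0 and η_n > 0 be sequences with ξ_n η_n → 0 and ξ_n/n^{1/2} → 0, and let k_n be integers with 1 ≤ k_n < n. For each n, θ ∈ ℝ and σ > 0, build the feasible estimators θ̃_H, θ̃_S, θ̃_AS from Z with law N(θ, σ²ξ_n²/n), S independent of Z with density ρ_{n−k_n}, threshold parameters ξ = ξ_n and η = η_n. Set a_n = min(n^{1/2}/ξ_n, (ξ_n η_n)^{−1}). Then each of the three estimators θ̃ ∈ {θ̃_H, θ̃_S, θ̃_AS} is uniformly a_n-consistent: for every ε > 0 there exists a real number M > 0 such that sup_{n} sup_{θ ∈ ℝ} sup_{0 < σ < ∞} P(a_n |θ̃ − θ| > σ M) < ε. -/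
open MeasureTheory ProbabilityTheory Filter Set
open scoped NNReal ENNReal

/-- Standard normal cdf. -/
noncomputable def Phi (x : ℝ) : ℝ :=
  ∫ t in Iic x, (Real.sqrt (2 * Real.pi))⁻¹ * Real.exp (-t ^ 2 / 2)

/-- Standard normal pdf. -/
noncomputable def stdPhi (t : ℝ) : ℝ :=
  (Real.sqrt (2 * Real.pi))⁻¹ * Real.exp (-t ^ 2 / 2)

/-- Extension of `Phi` to the extended reals, with `PhiE ⊤ = 1` and `PhiE ⊥ = 0`. -/
noncomputable def PhiE (z : EReal) : ℝ :=
  if z = ⊤ then 1 else if z = ⊥ then 0 else Phi z.toReal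

/-- Density of `m^{-1/2}` times the square root of a chi-square with `m` degrees of freedom. -/
noncomputable def rho (m : ℕ) (s : ℝ) : ℝ :=
  if 0 < s then
    (2 : ℝ) ^ ((1 : ℝ) - (m : ℝ) / 2) * (Real.Gamma ((m : ℝ) / 2))⁻¹ * Real.sqrt m *
      ((m : ℝ) * s ^ 2) ^ (((m : ℝ) - 1) / 2) * Real.exp (-(m : ℝ) * s ^ 2 / 2)
  else 0

/-- Joint law of the least-squares coordinate `Z ~ N(θ, σ²ξ²/n)` and the independent
variance-estimator ratio `S` with density `rho m`. -/
noncomputable def jointMeas (n m : ℕ) (ξ θ σ : ℝ) : Measure (ℝ × ℝ) :=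
  (gaussianReal θ (Real.toNNReal (σ ^ 2 * ξ ^ 2 / n))).prod
    (volume.withDensity fun s => ENNReal.ofReal (rho m s))

/-- Feasible hard-thresholding estimator `Z · 1(|Z| > σSξη)`. -/
noncomputable def hardF (σ ξ η : ℝ) (p : ℝ × ℝ) : ℝ :=
  if σ * p.2 * ξ * η < |p.1| then p.1 else 0

/-- Feasible soft-thresholding estimator `sign(Z)(|Z| − σSξη)₊`. -/
noncomputable def softF (σ ξ η : ℝ) (p : ℝ × ℝ) : ℝ :=
  Real.sign p.1 * max (|p.1| - σ * p.2 * ξ * η) 0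

/-- Feasible adaptive soft-thresholding estimator `Z(1 − σ²S²ξ²η²/Z²)₊`. -/
noncomputable def adaptF (σ ξ η : ℝ) (p : ℝ × ℝ) : ℝ :=
  if p.1 = 0 then 0 else p.1 * max (1 - (σ * p.2 * ξ * η) ^ 2 / p.1 ^ 2) 0


lemma rho_nonneg (m : ℕ) (s : ℝ) : 0 ≤ rho m s := by
  unfold rho
  split_ifs with h
  · have h1 : (0:ℝ) ≤ (Real.Gamma ((m:ℝ)/2))⁻¹ := by
      rcases Nat.eq_zero_or_pos m with hm | hm
      · simp [hm, Real.Gamma_zero]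
      · have : 0 < Real.Gamma ((m:ℝ)/2) := Real.Gamma_pos_of_pos (by positivity)
        positivity
    have h2 : (0:ℝ) ≤ (2 : ℝ) ^ ((1 : ℝ) - (m : ℝ) / 2) := by positivity
    have h3 : (0:ℝ) ≤ Real.sqrt m := Real.sqrt_nonneg _
    have h4 : (0:ℝ) ≤ ((m : ℝ) * s ^ 2) ^ (((m : ℝ) - 1) / 2) := by positivity
    have h5 : (0:ℝ) ≤ Real.exp (-(m : ℝ) * s ^ 2 / 2) := (Real.exp_pos _).le
    exact mul_nonneg (mul_nonneg (mul_nonneg (mul_nonneg h2 h1) h3) h4) h5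
  · exact le_refl 0

lemma rho_measurable (m : ℕ) : Measurable (rho m) := by
  unfold rho
  refine Measurable.ite measurableSet_Ioi ?_ measurable_const
  fun_prop

lemma rho_zero : rho 0 = fun _ => (0:ℝ) := by
  funext s
  unfold rho
  split_ifs with h
  · simp
  · rfl

noncomputable def Cm (m : ℕ) : ℝ :=
  (2 : ℝ) ^ ((1 : ℝ) - (m : ℝ) / 2) * (Real.Gamma ((m : ℝ) / 2))⁻¹ * Real.sqrt m *
    (m : ℝ) ^ (((m : ℝ) - 1) / 2)

lemma rho_eq_on (m : ℕ) (hm : 1 ≤ m) {s : ℝ} (hs : 0 < s) (j : ℝ) :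
    s ^ j * rho m s
      = Cm m * (s ^ ((m : ℝ) - 1 + j) * Real.exp (-((m : ℝ)/2) * s ^ (2:ℝ))) := by
  have hm0 : (0:ℝ) < (m:ℝ) := by exact_mod_cast hm
  have h2 : ((m:ℝ) * s ^ 2) ^ (((m:ℝ)-1)/2)
      = (m:ℝ) ^ (((m:ℝ)-1)/2) * s ^ ((m:ℝ)-1) := by
    rw [Real.mul_rpow (by positivity) (by positivity)]
    congr 1
    rw [← Real.rpow_natCast s 2, ← Real.rpow_mul hs.le]
    congr 1
    ring
  have hs2 : s ^ (2:ℝ) = s ^ 2 := by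
    rw [show (2:ℝ) = ((2:ℕ):ℝ) by norm_num, Real.rpow_natCast]
  have he : Real.exp (-(m:ℝ) * s ^ 2 / 2) = Real.exp (-((m:ℝ)/2) * s ^ (2:ℝ)) := by
    rw [hs2]; congr 1; ring
  have ha : s ^ ((m:ℝ) - 1 + j) = s ^ ((m:ℝ) - 1) * s ^ j := Real.rpow_add hs _ _
  unfold rho Cm
  rw [if_pos hs, h2, he, ha]
  ring

lemma rho_setIntegral (m : ℕ) (hm : 1 ≤ m) (j : ℝ) (hj : 0 ≤ j) :
    ∫ s in Ioi (0:ℝ), s ^ j * rho m s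
      = Cm m * (((m:ℝ)/2) ^ (-(((m:ℝ) - 1 + j) + 1) / 2) * (1 / 2)
          * Real.Gamma ((((m:ℝ) - 1 + j) + 1) / 2)) := by
  have hm0 : (0:ℝ) < (m:ℝ) := by exact_mod_cast hm
  have hm1 : (1:ℝ) ≤ (m:ℝ) := by exact_mod_cast hm
  rw [setIntegral_congr_fun measurableSet_Ioi (fun s hs => rho_eq_on m hm hs j),
    integral_const_mul,
    integral_rpow_mul_exp_neg_mul_rpow two_pos (by linarith) (by positivity)]

lemma rho_integrableOn (m : ℕ) (hm : 1 ≤ m) (j : ℝ) (hj : 0 ≤ j) :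
    IntegrableOn (fun s => s ^ j * rho m s) (Ioi (0:ℝ)) := by
  have hm1 : (1:ℝ) ≤ (m:ℝ) := by exact_mod_cast hm
  have hm0 : (0:ℝ) < (m:ℝ) := by exact_mod_cast hm
  have h := (integrableOn_rpow_mul_exp_neg_mul_rpow
      (show (-1:ℝ) < (m:ℝ) - 1 + j by linarith) two_pos
      (show (0:ℝ) < (m:ℝ)/2 by positivity)).const_mul (Cm m)
  exact IntegrableOn.congr_fun h (fun s hs => (rho_eq_on m hm hs j).symm) measurableSet_Ioi

lemma rho_indicator (m : ℕ) (j : ℝ) :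
    (Ioi (0:ℝ)).indicator (fun s => s ^ j * rho m s) = fun s => s ^ j * rho m s := by
  funext s
  by_cases hs : s ∈ Ioi (0:ℝ)
  · rw [indicator_of_mem hs]
  · rw [indicator_of_notMem hs]
    have : rho m s = 0 := by unfold rho; rw [if_neg (by simpa [mem_Ioi] using hs)]
    rw [this, mul_zero]

lemma rho_integrable (m : ℕ) (hm : 1 ≤ m) (j : ℝ) (hj : 0 ≤ j) :
    Integrable (fun s => s ^ j * rho m s) := by
  rw [← rho_indicator m j]
  exact (rho_integrableOn m hm j hj).integrable_indicator measurableSet_Ioi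

lemma rho_integral (m : ℕ) (hm : 1 ≤ m) (j : ℝ) (hj : 0 ≤ j) :
    ∫ s, s ^ j * rho m s
      = Cm m * (((m:ℝ)/2) ^ (-(((m:ℝ) - 1 + j) + 1) / 2) * (1 / 2)
          * Real.Gamma ((((m:ℝ) - 1 + j) + 1) / 2)) := by
  calc ∫ s, s ^ j * rho m s
      = ∫ s, (Ioi (0:ℝ)).indicator (fun s => s ^ j * rho m s) s := by rw [rho_indicator]
    _ = ∫ s in Ioi (0:ℝ), s ^ j * rho m s := integral_indicator measurableSet_Ioi
    _ = _ := rho_setIntegral m hm j hj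

lemma alg0 (x : ℝ) (hx : 0 < x) :
    (2:ℝ) ^ ((1:ℝ) - x/2) * (Real.Gamma (x/2))⁻¹ * Real.sqrt x * x ^ ((x-1)/2) *
      ((x/2) ^ (-(x/2)) * (1/2) * Real.Gamma (x/2)) = 1 := by
  have hG : 0 < Real.Gamma (x/2) := Real.Gamma_pos_of_pos (by positivity)
  have h1 : (x/2) ^ (-(x/2)) = x ^ (-(x/2)) * (2:ℝ) ^ (x/2) := by
    rw [Real.div_rpow hx.le (by norm_num), div_eq_mul_inv,
      ← Real.rpow_neg (by norm_num : (0:ℝ) ≤ 2), neg_neg]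
  have h2 : (2:ℝ) ^ ((1:ℝ) - x/2) * 2 ^ (x/2) = 2 := by
    rw [← Real.rpow_add two_pos, sub_add_cancel, Real.rpow_one]
  have h3 : Real.sqrt x * x ^ ((x-1)/2) * x ^ (-(x/2)) = 1 := by
    rw [Real.sqrt_eq_rpow, ← Real.rpow_add hx, ← Real.rpow_add hx,
      show 1/2 + (x-1)/2 + -(x/2) = 0 by ring, Real.rpow_zero]
  have hBG : (Real.Gamma (x/2))⁻¹ * Real.Gamma (x/2) = 1 := inv_mul_cancel₀ hG.ne'
  calc (2:ℝ) ^ ((1:ℝ) - x/2) * (Real.Gamma (x/2))⁻¹ * Real.sqrt x * x ^ ((x-1)/2) *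
      ((x/2) ^ (-(x/2)) * (1/2) * Real.Gamma (x/2))
      = (2:ℝ) ^ ((1:ℝ) - x/2) * (Real.Gamma (x/2))⁻¹ * Real.sqrt x * x ^ ((x-1)/2) *
      ((x ^ (-(x/2)) * (2:ℝ) ^ (x/2)) * (1/2) * Real.Gamma (x/2)) := by rw [h1]
    _ = ((2:ℝ) ^ ((1:ℝ) - x/2) * 2 ^ (x/2)) * ((Real.Gamma (x/2))⁻¹ * Real.Gamma (x/2)) *
        (Real.sqrt x * x ^ ((x-1)/2) * x ^ (-(x/2))) * (1/2) := by ring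
    _ = 2 * 1 * 1 * (1/2) := by rw [h2, h3, hBG]
    _ = 1 := by norm_num

lemma alg2 (x : ℝ) (hx : 0 < x) :
    (2:ℝ) ^ ((1:ℝ) - x/2) * (Real.Gamma (x/2))⁻¹ * Real.sqrt x * x ^ ((x-1)/2) *
      ((x/2) ^ (-((x+2)/2)) * (1/2) * Real.Gamma ((x+2)/2)) = 1 := by
  have hx2 : (x+2)/2 = x/2 + 1 := by ring
  have hne : x/2 ≠ 0 := by positivity
  have h4 : (x/2) ^ (-((x+2)/2)) * (x/2) = (x/2) ^ (-(x/2)) := by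
    rw [← Real.rpow_add_one hne]
    congr 1; ring
  calc (2:ℝ) ^ ((1:ℝ) - x/2) * (Real.Gamma (x/2))⁻¹ * Real.sqrt x * x ^ ((x-1)/2) *
      ((x/2) ^ (-((x+2)/2)) * (1/2) * Real.Gamma ((x+2)/2))
      = (2:ℝ) ^ ((1:ℝ) - x/2) * (Real.Gamma (x/2))⁻¹ * Real.sqrt x * x ^ ((x-1)/2) *
        ((x/2) ^ (-((x+2)/2)) * (1/2) * ((x/2) * Real.Gamma (x/2))) := by
        rw [hx2, Real.Gamma_add_one hne]
    _ = (2:ℝ) ^ ((1:ℝ) - x/2) * (Real.Gamma (x/2))⁻¹ * Real.sqrt x * x ^ ((x-1)/2) *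
        (((x/2) ^ (-((x+2)/2)) * (x/2)) * (1/2) * Real.Gamma (x/2)) := by ring
    _ = (2:ℝ) ^ ((1:ℝ) - x/2) * (Real.Gamma (x/2))⁻¹ * Real.sqrt x * x ^ ((x-1)/2) *
        ((x/2) ^ (-(x/2)) * (1/2) * Real.Gamma (x/2)) := by rw [h4]
    _ = 1 := alg0 x hx

lemma rho_int_one (m : ℕ) (hm : 1 ≤ m) : ∫ s, rho m s = 1 := by
  have hm0 : (0:ℝ) < (m:ℝ) := by exact_mod_cast hm
  have h := rho_integral m hm 0 le_rfl
  simp only [Real.rpow_zero, one_mul] at h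
  rw [h, show -(((m:ℝ) - 1 + 0) + 1) / 2 = -((m:ℝ)/2) by ring,
    show (((m:ℝ) - 1 + 0) + 1) / 2 = (m:ℝ)/2 by ring]
  exact alg0 (m:ℝ) hm0

lemma rho_sq_int_one (m : ℕ) (hm : 1 ≤ m) : ∫ s, s ^ 2 * rho m s = 1 := by
  have hm0 : (0:ℝ) < (m:ℝ) := by exact_mod_cast hm
  have h := rho_integral m hm 2 (by norm_num)
  have hfun : (fun s : ℝ => s ^ (2:ℝ) * rho m s) = fun s : ℝ => s ^ 2 * rho m s := by
    funext s
    rw [show (2:ℝ) = ((2:ℕ):ℝ) by norm_num, Real.rpow_natCast]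
  rw [hfun] at h
  rw [h, show -(((m:ℝ) - 1 + 2) + 1) / 2 = -(((m:ℝ)+2)/2) by ring,
    show (((m:ℝ) - 1 + 2) + 1) / 2 = ((m:ℝ)+2)/2 by ring]
  exact alg2 (m:ℝ) hm0

lemma rho_integrable' (m : ℕ) (hm : 1 ≤ m) : Integrable (rho m) := by
  have h := rho_integrable m hm 0 le_rfl
  simpa only [Real.rpow_zero, one_mul] using h

lemma rho_sq_integrable (m : ℕ) (hm : 1 ≤ m) :
    Integrable (fun s : ℝ => s ^ 2 * rho m s) := by
  have h := rho_integrable m hm 2 (by norm_num)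
  have hfun : (fun s : ℝ => s ^ (2:ℝ) * rho m s) = fun s : ℝ => s ^ 2 * rho m s := by
    funext s
    rw [show (2:ℝ) = ((2:ℕ):ℝ) by norm_num, Real.rpow_natCast]
  rwa [hfun] at h

lemma chi_univ (m : ℕ) :
    (volume.withDensity fun s => ENNReal.ofReal (rho m s)) univ ≤ 1 := by
  rcases Nat.eq_zero_or_pos m with hm | hm
  · subst hm
    simp [rho_zero]
  · rw [withDensity_apply _ MeasurableSet.univ, Measure.restrict_univ,
      ← ofReal_integral_eq_lintegral_ofReal (rho_integrable' m hm)
        (ae_of_all _ (rho_nonneg m)), rho_int_one m hm]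
    simp

lemma chi_tail (m : ℕ) (C : ℝ) (hC : 0 < C) :
    (volume.withDensity fun s => ENNReal.ofReal (rho m s)) {s : ℝ | C < |s|}
      ≤ ENNReal.ofReal (1 / C ^ 2) := by
  rcases Nat.eq_zero_or_pos m with hm | hm
  · subst hm
    simp [rho_zero]
  have hA : MeasurableSet {s : ℝ | C < |s|} :=
    measurableSet_lt measurable_const measurable_abs
  rw [withDensity_apply _ hA]
  have hmeas : Measurable fun s : ℝ => ENNReal.ofReal (1 / C ^ 2 * (s ^ 2 * rho m s)) :=
    (((measurable_id.pow_const 2).mul (rho_measurable m)).const_mul _).ennreal_ofReal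
  calc ∫⁻ s in {s : ℝ | C < |s|}, ENNReal.ofReal (rho m s)
      ≤ ∫⁻ s in {s : ℝ | C < |s|}, ENNReal.ofReal (1 / C ^ 2 * (s ^ 2 * rho m s)) := by
        refine setLIntegral_mono hmeas ?_
        intro x hx
        rcases le_or_gt x 0 with hx0 | hx0
        · have h0 : rho m x = 0 := by unfold rho; rw [if_neg (not_lt.mpr hx0)]
          simp [h0]
        · have hxx : C < x := by
            have := hx
            rwa [Set.mem_setOf_eq, abs_of_pos hx0] at this
          have h2 : C ^ 2 ≤ x ^ 2 := by nlinarith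
          have h3 := rho_nonneg m x
          apply ENNReal.ofReal_le_ofReal
          rw [div_mul_eq_mul_div, one_mul, le_div_iff₀ (by positivity : (0:ℝ) < C ^ 2)]
          nlinarith
    _ ≤ ∫⁻ s, ENNReal.ofReal (1 / C ^ 2 * (s ^ 2 * rho m s)) :=
        setLIntegral_le_lintegral _ _
    _ = ∫⁻ s, ENNReal.ofReal (1 / C ^ 2) * ENNReal.ofReal (s ^ 2 * rho m s) := by
        refine lintegral_congr fun s => ?_
        rw [ENNReal.ofReal_mul (by positivity)]
    _ = ENNReal.ofReal (1 / C ^ 2) * ∫⁻ s, ENNReal.ofReal (s ^ 2 * rho m s) :=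
        lintegral_const_mul' _ _ ENNReal.ofReal_ne_top
    _ ≤ ENNReal.ofReal (1 / C ^ 2) := by
        rw [← ofReal_integral_eq_lintegral_ofReal (rho_sq_integrable m hm)
          (ae_of_all _ fun s => mul_nonneg (sq_nonneg s) (rho_nonneg m s)),
          rho_sq_int_one m hm]
        simp

lemma gauss_tail (M θ σ ξn : ℝ) (n : ℕ) (hσ : 0 < σ) (hξ : 0 < ξn) (hM : 0 < M) :
    gaussianReal θ (Real.toNNReal (σ ^ 2 * ξn ^ 2 / n))
        {x : ℝ | σ * M * ξn / (2 * Real.sqrt n) < |x - θ|}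
      ≤ gaussianReal 0 1 {y : ℝ | M / 2 ≤ |y|} := by
  have hAset : MeasurableSet {x : ℝ | σ * M * ξn / (2 * Real.sqrt n) < |x - θ|} :=
    measurableSet_lt measurable_const ((measurable_id.sub_const θ).abs)
  rcases Nat.eq_zero_or_pos n with hn | hn
  · subst hn
    have h0 : Real.toNNReal (σ ^ 2 * ξn ^ 2 / (0:ℕ)) = 0 := by
      simp
    rw [h0, gaussianReal_zero_var]
    rw [Measure.dirac_apply' _ hAset]
    have : θ ∉ {x : ℝ | σ * M * ξn / (2 * Real.sqrt (0:ℕ)) < |x - θ|} := by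
      simp
    rw [indicator_of_notMem this]
    exact bot_le
  · have hn0 : (0:ℝ) < (n:ℝ) := by exact_mod_cast hn
    have hsn : (0:ℝ) < Real.sqrt n := Real.sqrt_pos.mpr hn0
    set c : ℝ := σ * ξn / Real.sqrt n with hc
    have hc0 : 0 < c := by positivity
    have hv : Real.toNNReal (σ ^ 2 * ξn ^ 2 / n) = (⟨c ^ 2, sq_nonneg c⟩ * 1 : ℝ≥0) := by
      apply NNReal.coe_injective
      push_cast
      rw [Real.coe_toNNReal _ (by positivity)]
      change _ = c ^ 2 * 1
      rw [hc, mul_one]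
      rw [div_pow, Real.sq_sqrt hn0.le, mul_pow]
    have hmap : gaussianReal θ (Real.toNNReal (σ ^ 2 * ξn ^ 2 / n))
        = (gaussianReal 0 1).map (fun y => c * y + θ) := by
      have h1 : (gaussianReal (0:ℝ) 1).map (fun y => c * y)
          = gaussianReal 0 ((⟨c ^ 2, sq_nonneg c⟩ * 1 : ℝ≥0)) := by
        rw [show ((⟨c ^ 2, sq_nonneg c⟩ * 1 : ℝ≥0)) = ⟨c ^ 2, sq_nonneg c⟩ from mul_one _]
        have h := gaussianReal_map_const_mul (μ := 0) (v := 1) c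
        simp at h
        exact h
      have h2 : (fun y : ℝ => c * y + θ) = (fun x : ℝ => x + θ) ∘ (fun y : ℝ => c * y) := rfl
      rw [hv, h2, ← Measure.map_map (measurable_id'.add_const θ) (measurable_const_mul c), h1,
        gaussianReal_map_add_const θ, zero_add]
    rw [hmap, Measure.map_apply (by fun_prop) hAset]
    refine measure_mono ?_
    intro y hy
    simp only [mem_preimage, Set.mem_setOf_eq] at hy ⊢
    have he : c * y + θ - θ = c * y := by ring
    rw [he, abs_mul, abs_of_pos hc0] at hy
    have ht : σ * M * ξn / (2 * Real.sqrt n) = c * (M / 2) := by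
      rw [hc]; field_simp
    rw [ht] at hy
    have := (mul_lt_mul_iff_right₀ hc0).mp hy
    linarith

lemma dev_hard (σ ξ η : ℝ) (p : ℝ × ℝ) : |hardF σ ξ η p - p.1| ≤ |σ * p.2 * ξ * η| := by
  unfold hardF
  split_ifs with h
  · simp; positivity
  · rw [zero_sub, abs_neg]
    exact le_trans (not_lt.mp h) (le_abs_self _)

lemma dev_soft (σ ξ η : ℝ) (p : ℝ × ℝ) : |softF σ ξ η p - p.1| ≤ |σ * p.2 * ξ * η| := by
  unfold softF
  set t := σ * p.2 * ξ * η with ht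
  have h1 := le_abs_self t
  have h2 := neg_abs_le t
  rcases lt_trichotomy p.1 0 with hx | hx | hx
  · rw [Real.sign_of_neg hx]
    rcases le_total (|p.1| - t) 0 with hm | hm
    · rw [max_eq_right hm, mul_zero, zero_sub, abs_neg, abs_of_neg hx]
      rw [abs_of_neg hx] at hm
      linarith
    · rw [max_eq_left hm, abs_of_neg hx]
      have : -1 * (-p.1 - t) - p.1 = t := by ring
      rw [this]
  · rw [hx]
    simp [Real.sign_zero, abs_nonneg]
  · rw [Real.sign_of_pos hx, one_mul]
    rcases le_total (|p.1| - t) 0 with hm | hm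
    · rw [max_eq_right hm, zero_sub, abs_neg]
      rw [abs_of_pos hx] at hm ⊢
      linarith
    · rw [max_eq_left hm, abs_of_pos hx]
      have : p.1 - t - p.1 = -t := by ring
      rw [this, abs_neg]

lemma dev_adapt (σ ξ η : ℝ) (p : ℝ × ℝ) : |adaptF σ ξ η p - p.1| ≤ |σ * p.2 * ξ * η| := by
  unfold adaptF
  split_ifs with h
  · simp [h]; positivity
  · set t := σ * p.2 * ξ * η with ht
    have hx2 : 0 < p.1 ^ 2 := by positivity
    rcases le_total (1 - t ^ 2 / p.1 ^ 2) 0 with hm | hm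
    · rw [max_eq_right hm, mul_zero, zero_sub, abs_neg]
      have hle : p.1 ^ 2 ≤ t ^ 2 := by
        have h1 : (1:ℝ) ≤ t ^ 2 / p.1 ^ 2 := by linarith
        calc p.1 ^ 2 = 1 * p.1 ^ 2 := (one_mul _).symm
          _ ≤ (t ^ 2 / p.1 ^ 2) * p.1 ^ 2 := by gcongr
          _ = t ^ 2 := by field_simp
      nlinarith [abs_nonneg p.1, abs_nonneg t, sq_abs p.1, sq_abs t]
    · rw [max_eq_left hm]
      have hle : t ^ 2 ≤ p.1 ^ 2 := by
        have h1 : t ^ 2 / p.1 ^ 2 ≤ 1 := by linarith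
        calc t ^ 2 = (t ^ 2 / p.1 ^ 2) * p.1 ^ 2 := by field_simp
          _ ≤ 1 * p.1 ^ 2 := by gcongr
          _ = p.1 ^ 2 := one_mul _
      have habs : |t| ≤ |p.1| := by
        nlinarith [abs_nonneg p.1, abs_nonneg t, sq_abs p.1, sq_abs t]
      have he : p.1 * (1 - t ^ 2 / p.1 ^ 2) - p.1 = -(t ^ 2 / p.1) := by
        field_simp
        ring
      rw [he, abs_neg, abs_div]
      rcases eq_or_ne t 0 with h0 | h0
      · simp [h0]
      · have hp : 0 < |p.1| := abs_pos.mpr h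
        rw [div_le_iff₀ hp]
        have h3 : |t ^ 2| = |t| * |t| := by rw [sq, abs_mul]
        rw [h3]
        exact mul_le_mul_of_nonneg_left habs (abs_nonneg t)


/-- uniform `a_n`-consistency of the feasible thresholding estimators. -/
theorem stmt_8 (ξ η : ℕ → ℝ) (hξ : ∀ n, 0 < ξ n) (hη : ∀ n, 0 < η n)
    (hxe : Tendsto (fun n : ℕ => ξ n * η n) atTop (nhds 0))
    (hxn : Tendsto (fun n : ℕ => ξ n / Real.sqrt n) atTop (nhds 0))
    (k : ℕ → ℕ) (hk : ∀ n, 2 ≤ n → 1 ≤ k n ∧ k n < n)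
    (T : ℝ → ℝ → ℝ → ℝ × ℝ → ℝ) (hT : T = hardF ∨ T = softF ∨ T = adaptF) :
    ∀ ε > (0 : ℝ), ∃ M > (0 : ℝ), ∀ (n : ℕ) (θ σ : ℝ), 0 < σ →
      jointMeas n (n - k n) (ξ n) θ σ
          {p : ℝ × ℝ |
            σ * M < min (Real.sqrt n / ξ n) ((ξ n * η n)⁻¹) * |T σ (ξ n) (η n) p - θ|}
        < ENNReal.ofReal ε := by
  intro ε hε
  -- choose a truncation level for the standard gaussian tail
  obtain ⟨K, hK⟩ : ∃ K : ℕ,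
      gaussianReal (0:ℝ) 1 {y : ℝ | (K:ℝ) ≤ |y|} < ENNReal.ofReal (ε/3) := by
    have hs : ∀ i : ℕ,
        NullMeasurableSet {y : ℝ | (i:ℝ) ≤ |y|} (gaussianReal (0:ℝ) 1) := fun i =>
      (measurableSet_le measurable_const measurable_abs).nullMeasurableSet
    have hanti : Antitone (fun i : ℕ => {y : ℝ | (i:ℝ) ≤ |y|}) := by
      intro i j hij y hy
      have hij' : (i:ℝ) ≤ (j:ℝ) := by exact_mod_cast hij
      exact le_trans hij' hy
    have hfin : ∃ i : ℕ, gaussianReal (0:ℝ) 1 {y : ℝ | (i:ℝ) ≤ |y|} ≠ ∞ :=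
      ⟨0, measure_ne_top _ _⟩
    have htend := tendsto_measure_iInter_atTop hs hanti hfin
    have hempty : ⋂ i : ℕ, {y : ℝ | (i:ℝ) ≤ |y|} = (∅ : Set ℝ) := by
      ext y
      simp only [mem_iInter, Set.mem_setOf_eq, mem_empty_iff_false, iff_false]
      push_neg
      obtain ⟨i, hi⟩ := exists_nat_gt |y|
      exact ⟨i, hi⟩
    rw [hempty, measure_empty] at htend
    have hpos : (0:ℝ≥0∞) < ENNReal.ofReal (ε/3) := ENNReal.ofReal_pos.mpr (by linarith)
    exact (htend.eventually_lt_const hpos).exists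
  set M : ℝ := max (2*(K:ℝ)) (Real.sqrt (12/ε) + 1) with hMdef
  have hM0 : 0 < M :=
    lt_of_lt_of_le (by positivity) (le_max_right _ _)
  have hMK : 2*(K:ℝ) ≤ M := le_max_left _ _
  have hM12 : 12/ε < M ^ 2 := by
    have h1 : Real.sqrt (12/ε) + 1 ≤ M := le_max_right _ _
    have h2 : Real.sqrt (12/ε) ^ 2 = 12/ε := Real.sq_sqrt (by positivity)
    nlinarith [Real.sqrt_nonneg (12/ε)]
  refine ⟨M, hM0, ?_⟩
  intro n θ σ hσ
  have hxip := hξ n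
  have hetap := hη n
  have hdev : ∀ p : ℝ × ℝ,
      |T σ (ξ n) (η n) p - p.1| ≤ |σ * p.2 * ξ n * η n| := by
    rcases hT with h | h | h <;> subst h <;> intro p
    · exact dev_hard _ _ _ p
    · exact dev_soft _ _ _ p
    · exact dev_adapt _ _ _ p
  set A : Set ℝ := {x : ℝ | σ * M * ξ n / (2 * Real.sqrt n) < |x - θ|} with hA
  set B : Set ℝ := {s : ℝ | M/2 < |s|} with hB
  have hsub : {p : ℝ × ℝ |
        σ * M < min (Real.sqrt n / ξ n) ((ξ n * η n)⁻¹) * |T σ (ξ n) (η n) p - θ|}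
      ⊆ (A ×ˢ (univ : Set ℝ)) ∪ ((univ : Set ℝ) ×ˢ B) := by
    intro p hp
    simp only [Set.mem_setOf_eq] at hp
    set a := min (Real.sqrt n / ξ n) ((ξ n * η n)⁻¹) with ha
    have ha1 : a ≤ Real.sqrt n / ξ n := min_le_left _ _
    have ha2 : a ≤ (ξ n * η n)⁻¹ := min_le_right _ _
    have ha0 : 0 ≤ a := le_min (by positivity) (by positivity)
    have htri : |T σ (ξ n) (η n) p - θ| ≤ |p.1 - θ| + |σ * p.2 * ξ n * η n| := by
      have h' : T σ (ξ n) (η n) p - θ = (T σ (ξ n) (η n) p - p.1) + (p.1 - θ) := by ring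
      rw [h']
      exact le_trans (abs_add_le _ _) (by linarith [hdev p])
    have hsplit : σ * M / 2 < a * |p.1 - θ| ∨ σ * M / 2 < a * |σ * p.2 * ξ n * η n| := by
      by_contra hcon
      push_neg at hcon
      have h1 : a * |T σ (ξ n) (η n) p - θ| ≤ a * (|p.1 - θ| + |σ * p.2 * ξ n * η n|) :=
        mul_le_mul_of_nonneg_left htri ha0
      rw [mul_add] at h1
      linarith [hp, hcon.1, hcon.2]
    rcases hsplit with h | h
    · left
      refine ⟨?_, trivial⟩
      show σ * M * ξ n / (2 * Real.sqrt n) < |p.1 - θ|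
      have h2 : σ * M / 2 < (Real.sqrt n / ξ n) * |p.1 - θ| :=
        lt_of_lt_of_le h (mul_le_mul_of_nonneg_right ha1 (abs_nonneg _))
      rcases Nat.eq_zero_or_pos n with hn | hn
      · exfalso
        subst hn
        simp only [Nat.cast_zero, Real.sqrt_zero, zero_div, zero_mul] at h2
        nlinarith
      · have hsn : 0 < Real.sqrt n :=
          Real.sqrt_pos.mpr (by exact_mod_cast hn)
        rw [div_lt_iff₀ (by positivity)]
        rw [div_mul_eq_mul_div, lt_div_iff₀ hxip] at h2
        nlinarith
    · right
      refine ⟨trivial, ?_⟩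
      show M/2 < |p.2|
      have h2 : σ * M / 2 < (ξ n * η n)⁻¹ * |σ * p.2 * ξ n * η n| :=
        lt_of_lt_of_le h (mul_le_mul_of_nonneg_right ha2 (abs_nonneg _))
      have habs : |σ * p.2 * ξ n * η n| = σ * |p.2| * ξ n * η n := by
        rw [abs_mul, abs_mul, abs_mul, abs_of_pos hσ, abs_of_pos hxip, abs_of_pos hetap]
      rw [habs] at h2
      have h3 : (ξ n * η n)⁻¹ * (σ * |p.2| * ξ n * η n) = σ * |p.2| := by
        field_simp
      rw [h3] at h2
      exact (mul_lt_mul_iff_right₀ hσ).mp (by linarith : σ * (M/2) < σ * |p.2|)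
  have hM2pos : (0:ℝ) < M/2 := by linarith
  have htail2 : ENNReal.ofReal (1 / (M/2) ^ 2) ≤ ENNReal.ofReal (ε/3) := by
    apply ENNReal.ofReal_le_ofReal
    rw [div_le_div_iff₀ (by positivity) (by norm_num)]
    have h12 : 12 < M ^ 2 * ε := (div_lt_iff₀ hε).mp hM12
    nlinarith [h12]
  have hKM : {y : ℝ | M/2 ≤ |y|} ⊆ {y : ℝ | (K:ℝ) ≤ |y|} := by
    intro y hy
    simp only [Set.mem_setOf_eq] at hy ⊢
    have : (K:ℝ) ≤ M/2 := by linarith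
    linarith
  unfold jointMeas
  calc (gaussianReal θ (Real.toNNReal (σ ^ 2 * ξ n ^ 2 / n))).prod
        (volume.withDensity fun s => ENNReal.ofReal (rho (n - k n) s))
        {p : ℝ × ℝ |
          σ * M < min (Real.sqrt n / ξ n) ((ξ n * η n)⁻¹) * |T σ (ξ n) (η n) p - θ|}
      ≤ (gaussianReal θ (Real.toNNReal (σ ^ 2 * ξ n ^ 2 / n))).prod
        (volume.withDensity fun s => ENNReal.ofReal (rho (n - k n) s))
        ((A ×ˢ (univ : Set ℝ)) ∪ ((univ : Set ℝ) ×ˢ B)) := measure_mono hsub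
    _ ≤ (gaussianReal θ (Real.toNNReal (σ ^ 2 * ξ n ^ 2 / n))).prod
        (volume.withDensity fun s => ENNReal.ofReal (rho (n - k n) s))
        (A ×ˢ (univ : Set ℝ))
        + (gaussianReal θ (Real.toNNReal (σ ^ 2 * ξ n ^ 2 / n))).prod
        (volume.withDensity fun s => ENNReal.ofReal (rho (n - k n) s))
        ((univ : Set ℝ) ×ˢ B) := measure_union_le _ _
    _ = gaussianReal θ (Real.toNNReal (σ ^ 2 * ξ n ^ 2 / n)) A
          * (volume.withDensity fun s => ENNReal.ofReal (rho (n - k n) s)) univ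
        + gaussianReal θ (Real.toNNReal (σ ^ 2 * ξ n ^ 2 / n)) univ
          * (volume.withDensity fun s => ENNReal.ofReal (rho (n - k n) s)) B := by
        rw [Measure.prod_prod, Measure.prod_prod]
    _ ≤ gaussianReal θ (Real.toNNReal (σ ^ 2 * ξ n ^ 2 / n)) A * 1
        + 1 * (volume.withDensity fun s => ENNReal.ofReal (rho (n - k n) s)) B := by
        gcongr
        · exact chi_univ _
        · exact le_of_eq measure_univ
    _ = gaussianReal θ (Real.toNNReal (σ ^ 2 * ξ n ^ 2 / n)) A
        + (volume.withDensity fun s => ENNReal.ofReal (rho (n - k n) s)) B := by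
        rw [mul_one, one_mul]
    _ ≤ gaussianReal 0 1 {y : ℝ | M/2 ≤ |y|} + ENNReal.ofReal (1 / (M/2) ^ 2) :=
        add_le_add (gauss_tail M θ σ (ξ n) n hσ hxip hM0) (chi_tail _ _ hM2pos)
    _ ≤ gaussianReal 0 1 {y : ℝ | (K:ℝ) ≤ |y|} + ENNReal.ofReal (ε/3) :=
        add_le_add (measure_mono hKM) htail2
    _ < ENNReal.ofReal (ε/3) + ENNReal.ofReal (ε/3) := by
        exact ENNReal.add_lt_add_right ENNReal.ofReal_ne_top hK
    _ ≤ ENNReal.ofReal ε := by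
        rw [← ENNReal.ofReal_add (by linarith) (by linarith)]
        exact ENNReal.ofReal_le_ofReal (by linarith)
end

section
/- Let ξ_n > 0 and η_n > 0 be sequences with ξ_n η_n → 0 and ξ_n/n^{1/2} → 0, and let k_n be integers with 1 ≤ k_n < n. For each n, θ ∈ ℝ and σ > 0, build the feasible estimators θ̃_H, θ̃_S, θ̃_AS from Z with law N(θ, σ²ξ_n²/n), S independent of Z with density ρ_{n−k_n}, threshold parameters ξ = ξ_n and η = η_n. Set a_n = min(n^{1/2}/ξ_n, (ξ_n η_n)^{−1}). Let θ̃ be any one of θ̃_H, θ̃_S, θ̃_AS and let b_n ≥ 0 be a sequence such that for every ε > 0 there exists a real M > 0 with limsup_{n→∞} sup_{θ ∈ ℝ} sup_{0 < σ < ∞} P(b_n |θ̃ − θ| > σ M) < ε. Then b_n = O(a_n), i.e., there is a constant C such that b_n ≤ C a_n for all sufficiently large n. -/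
open MeasureTheory ProbabilityTheory Filter Set
open scoped ENNReal NNReal

namespace Stmt9Aux
open Real

noncomputable def Cm (m : ℕ) : ℝ :=
  2 ^ ((1:ℝ) - (m:ℝ)/2) * (Real.Gamma ((m:ℝ)/2))⁻¹ * (m:ℝ) ^ ((m:ℝ)/2)

lemma Cm_pos {m : ℕ} (hm : 1 ≤ m) : 0 < Cm m := by
  have hm0 : (0:ℝ) < (m:ℝ) := by exact_mod_cast hm
  have hg : 0 < Real.Gamma ((m:ℝ)/2) := Real.Gamma_pos_of_pos (by linarith)
  unfold Cm
  positivity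

lemma rho_eq {m : ℕ} (hm : 1 ≤ m) {s : ℝ} (hs : 0 < s) :
    rho m s = Cm m * (s ^ ((m:ℝ) - 1) * Real.exp (-((m:ℝ)/2) * s ^ 2)) := by
  have hm0 : (0:ℝ) < (m:ℝ) := by exact_mod_cast hm
  rw [rho, if_pos hs]
  have h1 : ((m:ℝ) * s ^ 2) ^ (((m:ℝ) - 1) / 2)
      = (m:ℝ) ^ (((m:ℝ) - 1) / 2) * s ^ ((m:ℝ) - 1) := by
    rw [Real.mul_rpow hm0.le (by positivity)]
    congr 1
    rw [← Real.rpow_natCast s 2, ← Real.rpow_mul hs.le]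
    congr 1
    push_cast
    ring
  have h2 : Real.sqrt (m:ℝ) = (m:ℝ) ^ ((1:ℝ)/2) := by
    rw [Real.sqrt_eq_rpow]
  have h3 : (m:ℝ) ^ (((m:ℝ) - 1) / 2) * (m:ℝ) ^ ((1:ℝ)/2) = (m:ℝ) ^ ((m:ℝ)/2) := by
    rw [← Real.rpow_add hm0]; ring_nf
  have h4 : -(m:ℝ) * s ^ 2 / 2 = -((m:ℝ)/2) * s ^ 2 := by ring
  rw [h1, h2, h4, Cm]
  linear_combination (2 ^ ((1:ℝ) - (m:ℝ)/2) * (Real.Gamma ((m:ℝ)/2))⁻¹ * s ^ ((m:ℝ)-1) *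
    Real.exp (-((m:ℝ)/2) * s^2)) * h3


lemma rho_nonneg (m : ℕ) (s : ℝ) : 0 ≤ rho m s := by
  unfold rho
  split_ifs with h
  · have h1 : (0:ℝ) ≤ ((m:ℝ) * s ^ 2) ^ (((m:ℝ) - 1) / 2) := by positivity
    have h2 : (0:ℝ) < (2:ℝ) ^ ((1:ℝ) - (m:ℝ)/2) := by positivity
    have h3 : (0:ℝ) ≤ (Real.Gamma ((m:ℝ)/2))⁻¹ := by
      rcases Nat.eq_zero_or_pos m with hm | hm
      · simp [hm]
      · have : (0:ℝ) < (m:ℝ) := by exact_mod_cast hm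
        have := Real.Gamma_pos_of_pos (show (0:ℝ) < (m:ℝ)/2 by linarith)
        positivity
    have h4 : (0:ℝ) ≤ Real.sqrt m := Real.sqrt_nonneg _
    positivity
  · exact le_rfl

lemma rho_of_nonpos {m : ℕ} {s : ℝ} (hs : s ≤ 0) : rho m s = 0 := by
  rw [rho, if_neg (not_lt.2 hs)]

lemma measurable_rho (m : ℕ) : Measurable (rho m) := by
  unfold rho
  apply Measurable.ite measurableSet_Ioi _ measurable_const
  apply Measurable.mul
  · exact measurable_const.mul (((measurable_id'.pow_const 2).const_mul ((m:ℝ))).pow_const (((m:ℝ) - 1) / 2))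
  · exact ((((measurable_id'.pow_const 2).const_mul (-(m:ℝ))).div_const 2)).exp

lemma integrableOn_kernel {m : ℕ} (hm : 1 ≤ m) :
    IntegrableOn (fun s : ℝ => s ^ ((m:ℝ) - 1) * Real.exp (-((m:ℝ)/2) * s ^ 2)) (Ioi 0) := by
  have hb : (0:ℝ) < (m:ℝ)/2 := by
    have : (0:ℝ) < (m:ℝ) := by exact_mod_cast hm
    linarith
  have hq : (-1:ℝ) < (m:ℝ) - 1 := by
    have : (1:ℝ) ≤ (m:ℝ) := by exact_mod_cast hm
    linarith
  exact integrableOn_rpow_mul_exp_neg_mul_sq hb hq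

lemma integrableOn_rho {m : ℕ} (hm : 1 ≤ m) : IntegrableOn (rho m) (Ioi 0) := by
  have h := (integrableOn_kernel hm).const_mul (Cm m)
  exact IntegrableOn.congr_fun h (fun s hs => (rho_eq hm hs).symm) measurableSet_Ioi

lemma integral_kernel {m : ℕ} (hm : 1 ≤ m) (j : ℕ) :
    ∫ s in Ioi (0:ℝ), s ^ ((m:ℝ) - 1 + 2*j) * Real.exp (-((m:ℝ)/2) * s ^ 2)
      = ((m:ℝ)/2) ^ (-((m:ℝ) + 2*j)/2) * (1/2) * Real.Gamma (((m:ℝ) + 2*j)/2) := by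
  have hm0 : (0:ℝ) < (m:ℝ) := by exact_mod_cast hm
  have hb : (0:ℝ) < (m:ℝ)/2 := by linarith
  have hq : (-1:ℝ) < (m:ℝ) - 1 + 2*j := by
    have h0 : (0:ℝ) ≤ 2*(j:ℝ) := by positivity
    linarith
  have key := integral_rpow_mul_exp_neg_mul_rpow (p := 2) (q := (m:ℝ) - 1 + 2*j)
    (b := (m:ℝ)/2) two_pos hq hb
  have h2 : ∀ x ∈ Ioi (0:ℝ), x ^ ((m:ℝ) - 1 + 2*j) * Real.exp (-((m:ℝ)/2) * x ^ (2:ℝ))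
      = x ^ ((m:ℝ) - 1 + 2*j) * Real.exp (-((m:ℝ)/2) * x ^ 2) := by
    intro x hx
    rw [← Real.rpow_natCast x 2]
    norm_num
  rw [setIntegral_congr_fun measurableSet_Ioi h2] at key
  have e1 : -(((m:ℝ) - 1 + 2*(j:ℝ)) + 1) / 2 = -((m:ℝ) + 2*(j:ℝ))/2 := by ring
  have e2 : (((m:ℝ) - 1 + 2*(j:ℝ)) + 1) / 2 = ((m:ℝ) + 2*(j:ℝ))/2 := by ring
  rw [key, e1, e2]


lemma Cm_norm {m : ℕ} (hm : 1 ≤ m) :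
    Cm m * (((m:ℝ)/2) ^ (-(m:ℝ)/2) * (1/2) * Real.Gamma ((m:ℝ)/2)) = 1 := by
  have hm0 : (0:ℝ) < (m:ℝ) := by exact_mod_cast hm
  have hg : 0 < Real.Gamma ((m:ℝ)/2) := Real.Gamma_pos_of_pos (by linarith)
  have h1 : ((m:ℝ)/2) ^ (-(m:ℝ)/2) = (m:ℝ) ^ (-(m:ℝ)/2) * (2:ℝ) ^ ((m:ℝ)/2) := by
    rw [div_eq_mul_inv, Real.mul_rpow hm0.le (by norm_num),
      Real.inv_rpow (by norm_num : (0:ℝ) ≤ 2), ← Real.rpow_neg (by norm_num : (0:ℝ) ≤ 2)]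
    ring_nf
  have e2 : (2:ℝ) ^ ((1:ℝ) - (m:ℝ)/2) * (2:ℝ) ^ ((m:ℝ)/2) = 2 := by
    rw [← Real.rpow_add two_pos]; norm_num
  have e3 : (m:ℝ) ^ ((m:ℝ)/2) * (m:ℝ) ^ (-(m:ℝ)/2) = 1 := by
    rw [← Real.rpow_add hm0, show (m:ℝ)/2 + -(m:ℝ)/2 = 0 by ring]
    exact Real.rpow_zero _
  have expand : Cm m * (((m:ℝ)/2) ^ (-(m:ℝ)/2) * (1/2) * Real.Gamma ((m:ℝ)/2))
      = ((2:ℝ) ^ ((1:ℝ) - (m:ℝ)/2) * (2:ℝ) ^ ((m:ℝ)/2)) * ((m:ℝ) ^ ((m:ℝ)/2) * (m:ℝ) ^ (-(m:ℝ)/2))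
        * ((Real.Gamma ((m:ℝ)/2))⁻¹ * Real.Gamma ((m:ℝ)/2)) * (1/2) := by
    rw [h1, Cm]; ring
  rw [expand, e2, e3, inv_mul_cancel₀ hg.ne']
  norm_num

lemma Cm_norm2 {m : ℕ} (hm : 1 ≤ m) :
    Cm m * (((m:ℝ)/2) ^ (-((m:ℝ) + 2)/2) * (1/2) * Real.Gamma (((m:ℝ) + 2)/2)) = 1 := by
  have hm0 : (0:ℝ) < (m:ℝ) := by exact_mod_cast hm
  have hb : (0:ℝ) < (m:ℝ)/2 := by linarith
  have hG : Real.Gamma (((m:ℝ) + 2)/2) = ((m:ℝ)/2) * Real.Gamma ((m:ℝ)/2) := by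
    rw [show ((m:ℝ) + 2)/2 = (m:ℝ)/2 + 1 by ring, Real.Gamma_add_one hb.ne']
  have hE : ((m:ℝ)/2) ^ (-((m:ℝ) + 2)/2) = ((m:ℝ)/2) ^ (-(m:ℝ)/2) * ((m:ℝ)/2)⁻¹ := by
    rw [← Real.rpow_neg_one ((m:ℝ)/2), ← Real.rpow_add hb]
    congr 1
    ring
  have expand : Cm m * (((m:ℝ)/2) ^ (-((m:ℝ) + 2)/2) * (1/2) * Real.Gamma (((m:ℝ) + 2)/2))
      = (Cm m * (((m:ℝ)/2) ^ (-(m:ℝ)/2) * (1/2) * Real.Gamma ((m:ℝ)/2)))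
        * (((m:ℝ)/2)⁻¹ * ((m:ℝ)/2)) := by
    rw [hG, hE]; ring
  rw [expand, Cm_norm hm, inv_mul_cancel₀ hb.ne']
  norm_num

lemma integral_rho {m : ℕ} (hm : 1 ≤ m) : ∫ s in Ioi (0:ℝ), rho m s = 1 := by
  rw [setIntegral_congr_fun measurableSet_Ioi (fun s hs => rho_eq hm hs), integral_const_mul]
  have k := integral_kernel hm 0
  simp only [Nat.cast_zero, mul_zero, add_zero] at k
  rw [k]
  exact Cm_norm hm

lemma integrableOn_sq_rho {m : ℕ} (hm : 1 ≤ m) :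
    IntegrableOn (fun s => s ^ 2 * rho m s) (Ioi (0:ℝ)) := by
  have hm0 : (0:ℝ) < (m:ℝ) := by exact_mod_cast hm
  have hb : (0:ℝ) < (m:ℝ)/2 := by linarith
  have hq : (-1:ℝ) < (m:ℝ) + 1 := by linarith
  have h := (integrableOn_rpow_mul_exp_neg_mul_sq hb hq).const_mul (Cm m)
  apply IntegrableOn.congr_fun h _ measurableSet_Ioi
  intro s hs
  have hs' : (0:ℝ) < s := hs
  simp only
  rw [rho_eq hm hs']
  have hpow : s ^ ((m:ℝ) + 1) = s ^ (2:ℕ) * s ^ ((m:ℝ) - 1) := by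
    rw [← Real.rpow_natCast s 2, ← Real.rpow_add hs']
    congr 1
    push_cast
    ring
  rw [hpow]
  ring

lemma integral_sq_rho {m : ℕ} (hm : 1 ≤ m) : ∫ s in Ioi (0:ℝ), s ^ 2 * rho m s = 1 := by
  have hcong : ∀ s ∈ Ioi (0:ℝ), s ^ 2 * rho m s
      = Cm m * (s ^ ((m:ℝ) - 1 + 2) * Real.exp (-((m:ℝ)/2) * s ^ 2)) := by
    intro s hs
    have hs' : (0:ℝ) < s := hs
    rw [rho_eq hm hs']
    have hpow : s ^ ((m:ℝ) - 1 + 2) = s ^ (2:ℕ) * s ^ ((m:ℝ) - 1) := by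
      rw [← Real.rpow_natCast s 2, ← Real.rpow_add hs']
      congr 1
      push_cast
      ring
    rw [hpow]
    ring
  rw [setIntegral_congr_fun measurableSet_Ioi hcong, integral_const_mul]
  have k := integral_kernel hm 1
  simp only [Nat.cast_one, mul_one] at k
  rw [k]
  exact Cm_norm2 hm


noncomputable def nu (m : ℕ) : Measure ℝ :=
  volume.withDensity fun s => ENNReal.ofReal (rho m s)

lemma nu_apply (m : ℕ) {A : Set ℝ} (hA : MeasurableSet A) :
    nu m A = ∫⁻ s in A, ENNReal.ofReal (rho m s) := withDensity_apply _ hA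

lemma nu_apply_ofReal {m : ℕ} (hm : 1 ≤ m) {A : Set ℝ} (hA : MeasurableSet A)
    (hsub : A ⊆ Ioi 0) : nu m A = ENNReal.ofReal (∫ s in A, rho m s) := by
  rw [nu_apply m hA, ← ofReal_integral_eq_lintegral_ofReal]
  · exact (integrableOn_rho hm).mono_set hsub
  · exact ae_of_all _ (fun s => rho_nonneg m s)

lemma nu_Iic0 (m : ℕ) : nu m (Iic (0:ℝ)) = 0 := by
  rw [nu_apply m measurableSet_Iic]
  rw [setLIntegral_congr_fun measurableSet_Iic
    (fun s (hs : s ∈ Iic (0:ℝ)) => by rw [rho_of_nonpos hs])]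
  simp

lemma nu_univ {m : ℕ} (hm : 1 ≤ m) : nu m univ = 1 := by
  have hdisj : Disjoint (Iic (0:ℝ)) (Ioi 0) := Iic_disjoint_Ioi le_rfl
  rw [← Iic_union_Ioi (a := (0:ℝ)), measure_union hdisj measurableSet_Ioi, nu_Iic0,
    nu_apply_ofReal hm measurableSet_Ioi (subset_refl _), integral_rho hm]
  simp

lemma nu_Ioi_le {m : ℕ} (hm : 1 ≤ m) {t : ℝ} (ht : 0 < t) :
    nu m (Ioi t) ≤ ENNReal.ofReal (1/t^2) := by
  have hsub : Ioi t ⊆ Ioi (0:ℝ) := Ioi_subset_Ioi ht.le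
  rw [nu_apply_ofReal hm measurableSet_Ioi hsub]
  apply ENNReal.ofReal_le_ofReal
  have h1 : ∫ s in Ioi t, rho m s ≤ ∫ s in Ioi t, (1/t^2) * (s^2 * rho m s) := by
    apply setIntegral_mono_on ((integrableOn_rho hm).mono_set hsub)
      (((integrableOn_sq_rho hm).mono_set hsub).const_mul _) measurableSet_Ioi
    intro s hs
    have hts : t < s := hs
    have h0 : 0 ≤ rho m s := rho_nonneg m s
    have : t^2 ≤ s^2 := by nlinarith
    rw [div_mul_eq_mul_div, one_mul, le_div_iff₀ (by positivity)]
    nlinarith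
  have h2 : ∫ s in Ioi t, s^2 * rho m s ≤ 1 := by
    rw [← integral_sq_rho hm]
    apply setIntegral_mono_set (integrableOn_sq_rho hm)
      (ae_of_all _ (fun s => mul_nonneg (sq_nonneg s) (rho_nonneg m s)))
      (HasSubset.Subset.eventuallyLE hsub)
  calc ∫ s in Ioi t, rho m s ≤ ∫ s in Ioi t, (1/t^2) * (s^2 * rho m s) := h1
    _ = (1/t^2) * ∫ s in Ioi t, s^2 * rho m s := by rw [integral_const_mul]
    _ ≤ (1/t^2) * 1 := by
        apply mul_le_mul_of_nonneg_left h2 (by positivity)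
    _ = 1/t^2 := by ring

lemma nu_Iic_ge {m : ℕ} (hm : 1 ≤ m) {t : ℝ} (ht : 0 < t) :
    1 - ENNReal.ofReal (1/t^2) ≤ nu m (Iic t) := by
  have h := measure_add_measure_compl (μ := nu m)
    (measurableSet_Ioi : MeasurableSet (Ioi t))
  rw [compl_Ioi, nu_univ hm] at h
  rw [tsub_le_iff_left, ← h]
  exact add_le_add_left (nu_Ioi_le hm ht) _

lemma nu_Icc_eq_Iic {m : ℕ} {t : ℝ} (ht : 0 ≤ t) : nu m (Icc 0 t) = nu m (Iic t) := by
  have hu : Iic t = Iio (0:ℝ) ∪ Icc 0 t := by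
    ext x
    simp only [mem_Iic, mem_union, mem_Iio, mem_Icc]
    constructor
    · intro hx
      rcases lt_or_ge x 0 with h | h
      · exact Or.inl h
      · exact Or.inr ⟨h, hx⟩
    · rintro (h | ⟨h1, h2⟩)
      · linarith
      · exact h2
  have h0 : nu m (Iio (0:ℝ)) = 0 :=
    le_antisymm (le_trans (measure_mono Iio_subset_Iic_self) (nu_Iic0 m).le) (zero_le)
  rw [hu, measure_union _ measurableSet_Icc, h0, zero_add]
  exact disjoint_left.2 (fun x (hx : x < 0) ⟨hx2, _⟩ => absurd hx2 (not_le.2 hx))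

lemma exp_two_le : Real.exp 2 ≤ 7.5 := by
  have h := Real.exp_one_lt_d9
  have h2 : Real.exp 2 = Real.exp 1 * Real.exp 1 := by
    rw [← Real.exp_add]; norm_num
  have hp : 0 < Real.exp 1 := Real.exp_pos 1
  nlinarith

lemma nu_Iio_small {m : ℕ} (hm : 1 ≤ m) :
    nu m (Iio (1/15 : ℝ)) ≤ ENNReal.ofReal (1/2) := by
  have hm0 : (0:ℝ) < (m:ℝ) := by exact_mod_cast hm
  have hm1 : (1:ℝ) ≤ (m:ℝ) := by exact_mod_cast hm
  have hCm := Cm_pos hm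
  -- step (i): Cm m ≤ exp (2 * m)
  have hint_rho_Icc : IntegrableOn (rho m) (Icc (1:ℝ) 2) :=
    (integrableOn_rho hm).mono_set (fun x hx => lt_of_lt_of_le one_pos hx.1)
  have hlow : ∀ s ∈ Icc (1:ℝ) 2, Cm m * Real.exp (-(2 * (m:ℝ))) ≤ rho m s := by
    intro s hs
    obtain ⟨hs1, hs2⟩ := hs
    have hs0 : (0:ℝ) < s := by linarith
    rw [rho_eq hm hs0]
    have h1 : (1:ℝ) ≤ s ^ ((m:ℝ) - 1) := by
      apply Real.one_le_rpow hs1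
      linarith
    have h2 : Real.exp (-(2 * (m:ℝ))) ≤ Real.exp (-((m:ℝ)/2) * s^2) := by
      apply Real.exp_le_exp.2
      have hs4 : s^2 ≤ 4 := by nlinarith
      have := mul_le_mul_of_nonneg_left hs4 (by positivity : (0:ℝ) ≤ (m:ℝ)/2)
      linarith
    have he0 : 0 < Real.exp (-(2 * (m:ℝ))) := Real.exp_pos _
    calc Cm m * Real.exp (-(2*(m:ℝ))) = Cm m * (1 * Real.exp (-(2*(m:ℝ)))) := by ring
      _ ≤ Cm m * (s ^ ((m:ℝ)-1) * Real.exp (-((m:ℝ)/2) * s^2)) := by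
          apply mul_le_mul_of_nonneg_left _ hCm.le
          apply mul_le_mul h1 h2 he0.le (by positivity)
  have hCexp : Cm m * Real.exp (-(2 * (m:ℝ))) ≤ 1 := by
    have hle1 : ∫ s in Icc (1:ℝ) 2, Cm m * Real.exp (-(2 * (m:ℝ))) ≤ ∫ s in Icc (1:ℝ) 2, rho m s :=
      setIntegral_mono_on (integrableOn_const (by
        rw [Real.volume_Icc]; exact ENNReal.ofReal_ne_top)) hint_rho_Icc
        measurableSet_Icc hlow
    have hle2 : ∫ s in Icc (1:ℝ) 2, rho m s ≤ 1 := by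
      have h := setIntegral_mono_set (μ := volume) (integrableOn_rho hm)
        (ae_of_all _ (fun s => rho_nonneg m s))
        (HasSubset.Subset.eventuallyLE
          (show Icc (1:ℝ) 2 ⊆ Ioi 0 from fun x hx => lt_of_lt_of_le one_pos hx.1))
      rw [integral_rho hm] at h
      exact h
    have hconst : ∫ _ in Icc (1:ℝ) 2, Cm m * Real.exp (-(2 * (m:ℝ)))
        = Cm m * Real.exp (-(2 * (m:ℝ))) := by
      rw [setIntegral_const]
      rw [measureReal_def, Real.volume_Icc]
      norm_num
    linarith [hconst ▸ hle1]
  have hC : Cm m ≤ Real.exp (2 * (m:ℝ)) := by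
    have h := mul_le_mul_of_nonneg_right hCexp (le_of_lt (Real.exp_pos (2*(m:ℝ))))
    rw [one_mul, mul_assoc, ← Real.exp_add] at h
    simpa using h
  -- step (ii)(iii): bound the integral on (0, 1/15)
  set δ : ℝ := 1/15 with hδ
  have hδ0 : (0:ℝ) < δ := by norm_num
  have hsplit : Iio δ = Iic (0:ℝ) ∪ Ioo 0 δ := by
    ext x
    simp only [mem_Iio, mem_union, mem_Iic, mem_Ioo]
    constructor
    · intro hx
      rcases le_or_gt x 0 with h | h
      · exact Or.inl h
      · exact Or.inr ⟨h, hx⟩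
    · rintro (h | ⟨h1, h2⟩)
      · linarith
      · exact h2
  have hdisj : Disjoint (Iic (0:ℝ)) (Ioo 0 δ) :=
    disjoint_left.2 (fun x (hx : x ≤ 0) ⟨hx2, _⟩ => absurd hx2 (not_lt.2 hx))
  rw [hsplit, measure_union hdisj measurableSet_Ioo, nu_Iic0, zero_add,
    nu_apply_ofReal hm measurableSet_Ioo (fun x hx => hx.1)]
  apply ENNReal.ofReal_le_ofReal
  have hub : ∀ s ∈ Ioo (0:ℝ) δ, rho m s ≤ Cm m * δ ^ ((m:ℝ) - 1) := by
    intro s hs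
    obtain ⟨hs1, hs2⟩ := hs
    rw [rho_eq hm hs1]
    have h1 : s ^ ((m:ℝ) - 1) ≤ δ ^ ((m:ℝ) - 1) := by
      apply Real.rpow_le_rpow hs1.le hs2.le
      have : (1:ℝ) ≤ (m:ℝ) := by exact_mod_cast hm
      linarith
    have h2 : Real.exp (-((m:ℝ)/2) * s^2) ≤ 1 := by
      rw [Real.exp_le_one_iff]
      nlinarith
    have h3 : (0:ℝ) ≤ s ^ ((m:ℝ) - 1) := Real.rpow_nonneg hs1.le _
    calc Cm m * (s ^ ((m:ℝ)-1) * Real.exp (-((m:ℝ)/2) * s^2))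
        ≤ Cm m * (δ ^ ((m:ℝ)-1) * 1) := by
          apply mul_le_mul_of_nonneg_left _ hCm.le
          apply mul_le_mul h1 h2 (Real.exp_pos _).le (Real.rpow_nonneg hδ0.le _)
      _ = Cm m * δ ^ ((m:ℝ)-1) := by ring
  have hint : ∫ s in Ioo (0:ℝ) δ, rho m s ≤ ∫ _ in Ioo (0:ℝ) δ, Cm m * δ ^ ((m:ℝ) - 1) := by
    apply setIntegral_mono_on ((integrableOn_rho hm).mono_set (fun x hx => hx.1))
      (integrableOn_const (by
        rw [Real.volume_Ioo]; exact ENNReal.ofReal_ne_top))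
      measurableSet_Ioo hub
  have hconst : ∫ _ in Ioo (0:ℝ) δ, Cm m * δ ^ ((m:ℝ) - 1)
      = δ * (Cm m * δ ^ ((m:ℝ) - 1)) := by
    rw [setIntegral_const, measureReal_def, Real.volume_Ioo, ENNReal.toReal_ofReal (by linarith)]
    rw [sub_zero, smul_eq_mul]
  -- step (iv): numeric bound
  have hfin : δ * (Cm m * δ ^ ((m:ℝ) - 1)) ≤ 1/2 := by
    have hδm : δ * δ ^ ((m:ℝ) - 1) = δ ^ (m:ℝ) := by
      nth_rewrite 1 [← Real.rpow_one δ]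
      rw [← Real.rpow_add hδ0]
      congr 1
      ring
    have key : δ * (Cm m * δ ^ ((m:ℝ) - 1)) = Cm m * δ ^ (m:ℝ) := by
      rw [← hδm]; ring
    rw [key]
    have hδpow : δ ^ (m:ℝ) = δ ^ m := Real.rpow_natCast δ m
    have hexp : Real.exp (2 * (m:ℝ)) = Real.exp 2 ^ m := by
      rw [← Real.exp_nat_mul]
      ring_nf
    have h1 : Cm m * δ ^ (m:ℝ) ≤ Real.exp 2 ^ m * δ ^ m := by
      rw [hδpow, ← hexp]
      apply mul_le_mul_of_nonneg_right hC (by positivity)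
    have h2 : Real.exp 2 ^ m * δ ^ m = (Real.exp 2 * δ) ^ m := (mul_pow _ _ m).symm
    have h3 : (Real.exp 2 * δ) ^ m ≤ (1/2) ^ m := by
      apply pow_le_pow_left₀ (by positivity)
      rw [hδ]
      nlinarith [exp_two_le, Real.exp_pos 2]
    have h4 : ((1:ℝ)/2) ^ m ≤ (1/2) ^ 1 := by
      apply pow_le_pow_of_le_one (by norm_num) (by norm_num) hm
    calc Cm m * δ ^ (m:ℝ) ≤ (1/2)^m := by rw [h2] at h1; linarith
      _ ≤ 1/2 := by rw [pow_one] at h4; exact h4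
  exact (hint.trans (le_of_eq hconst)).trans hfin

lemma nu_Ici_ge {m : ℕ} (hm : 1 ≤ m) :
    ENNReal.ofReal (1/2) ≤ nu m (Ici (1/15 : ℝ)) := by
  have h := measure_add_measure_compl (μ := nu m)
    (measurableSet_Iio : MeasurableSet (Iio (1/15:ℝ)))
  rw [compl_Iio, nu_univ hm] at h
  have h2 : (1:ℝ≥0∞) ≤ ENNReal.ofReal (1/2) + nu m (Ici (1/15:ℝ)) := by
    rw [← h]
    exact add_le_add_left (nu_Iio_small hm) _
  have h3 : (1:ℝ≥0∞) - ENNReal.ofReal (1/2) = ENNReal.ofReal (1/2) := by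
    rw [← ENNReal.ofReal_one, ← ENNReal.ofReal_sub _ (by norm_num)]
    norm_num
  rw [← h3, tsub_le_iff_left]
  exact h2


lemma nu_Icc_ge {m : ℕ} (hm : 1 ≤ m) {t : ℝ} (ht : 0 < t) :
    1 - ENNReal.ofReal (1/t^2) ≤ nu m (Icc 0 t) := by
  rw [nu_Icc_eq_Iic ht.le]
  exact nu_Iic_ge hm ht

lemma gauss_lb {v : ℝ≥0} (hv : v ≠ 0) (θ a c : ℝ) (hac : a ≤ c)
    (hd : ∀ x ∈ Ioo a c, (x - θ)^2 ≤ 4 * (v:ℝ)) :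
    ENNReal.ofReal ((c - a) / (27 * Real.sqrt (v:ℝ))) ≤ gaussianReal θ v (Ioo a c) := by
  have hvpos : (0:ℝ) < (v:ℝ) := by
    have := pos_iff_ne_zero.2 hv
    exact_mod_cast this
  have hsv : 0 < Real.sqrt (v:ℝ) := Real.sqrt_pos.2 hvpos
  have hπ : (0:ℝ) ≤ 2 * Real.pi := by positivity
  have hsqrt2pi : Real.sqrt (2 * Real.pi) ≤ 3 := by
    have h1 : (0:ℝ) ≤ Real.sqrt (2 * Real.pi) := Real.sqrt_nonneg _
    have h2 := Real.sq_sqrt hπ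
    have h3 : 2 * Real.pi ≤ 9 := by
      have := Real.pi_le_four
      linarith
    nlinarith
  have hexp2 : Real.exp (-2) ≥ 1/9 := by
    rw [Real.exp_neg, ge_iff_le, le_inv_comm₀ (by norm_num) (Real.exp_pos 2)]
    calc Real.exp 2 ≤ 7.5 := exp_two_le
      _ ≤ (1/9:ℝ)⁻¹ := by norm_num
  set pdflb : ℝ := (Real.sqrt (2 * Real.pi * (v:ℝ)))⁻¹ * Real.exp (-2) with hpdflb
  have hlbval : (27 * Real.sqrt (v:ℝ))⁻¹ ≤ pdflb := by
    have hm1 : Real.sqrt (2 * Real.pi * (v:ℝ)) = Real.sqrt (2 * Real.pi) * Real.sqrt (v:ℝ) :=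
      Real.sqrt_mul hπ _
    have hle : Real.sqrt (2 * Real.pi * (v:ℝ)) ≤ 3 * Real.sqrt (v:ℝ) := by
      rw [hm1]
      exact mul_le_mul_of_nonneg_right hsqrt2pi hsv.le
    have hpos : 0 < Real.sqrt (2 * Real.pi * (v:ℝ)) := by
      rw [hm1]
      positivity
    have hinv : (3 * Real.sqrt (v:ℝ))⁻¹ ≤ (Real.sqrt (2 * Real.pi * (v:ℝ)))⁻¹ :=
      inv_anti₀ hpos hle
    calc (27 * Real.sqrt (v:ℝ))⁻¹ = (3 * Real.sqrt (v:ℝ))⁻¹ * (1/9) := by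
          field_simp
          ring
      _ ≤ (Real.sqrt (2 * Real.pi * (v:ℝ)))⁻¹ * Real.exp (-2) :=
          mul_le_mul hinv hexp2 (by norm_num) (by positivity)
  have hlb : ∀ x ∈ Ioo a c, pdflb ≤ gaussianPDFReal θ v x := by
    intro x hx
    rw [gaussianPDFReal]
    apply mul_le_mul_of_nonneg_left _ (by positivity)
    apply Real.exp_le_exp.2
    have := hd x hx
    rw [neg_div, neg_le_neg_iff]
    rw [div_le_iff₀ (by positivity)]
    linarith
  rw [gaussianReal_apply_eq_integral θ hv]
  apply ENNReal.ofReal_le_ofReal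
  have hconst : ∫ _ in Ioo a c, pdflb = (c - a) * pdflb := by
    rw [setIntegral_const, measureReal_def, Real.volume_Ioo, ENNReal.toReal_ofReal (by linarith), smul_eq_mul]
  have hmono : ∫ _ in Ioo a c, pdflb ≤ ∫ x in Ioo a c, gaussianPDFReal θ v x :=
    setIntegral_mono_on (integrableOn_const (by
        rw [Real.volume_Ioo]; exact ENNReal.ofReal_ne_top))
      ((integrable_gaussianPDFReal θ v).integrableOn) measurableSet_Ioo hlb
  have hfirst : (c - a) / (27 * Real.sqrt (v:ℝ)) ≤ (c - a) * pdflb := by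
    rw [div_eq_mul_inv]
    exact mul_le_mul_of_nonneg_left hlbval (by linarith)
  linarith [hconst ▸ hmono]

end Stmt9Aux

set_option maxHeartbeats 2000000 in
open Stmt9Aux in
/-- the uniform rate `a_n = min(n^{1/2}/ξ_n, (ξ_n η_n)^{-1})` is sharp: any
rate `b_n` at which a feasible thresholding estimator is uniformly consistent satisfies
`b_n = O(a_n)`. -/
theorem stmt_9 (ξ η : ℕ → ℝ) (hξ : ∀ n, 0 < ξ n) (hη : ∀ n, 0 < η n)
    (hxe : Tendsto (fun n : ℕ => ξ n * η n) atTop (nhds 0))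
    (hxn : Tendsto (fun n : ℕ => ξ n / Real.sqrt n) atTop (nhds 0))
    (k : ℕ → ℕ) (hk : ∀ n, 2 ≤ n → 1 ≤ k n ∧ k n < n)
    (T : ℝ → ℝ → ℝ → ℝ × ℝ → ℝ) (hT : T = hardF ∨ T = softF ∨ T = adaptF)
    (b : ℕ → ℝ) (hb : ∀ n, 0 ≤ b n)
    (hbdd : ∀ ε > (0 : ℝ), ∃ M > (0 : ℝ), ∀ᶠ n in atTop, ∀ θ σ : ℝ, 0 < σ →
      jointMeas n (n - k n) (ξ n) θ σ
          {p : ℝ × ℝ | σ * M < b n * |T σ (ξ n) (η n) p - θ|}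
        < ENNReal.ofReal ε) :
    ∃ C : ℝ, ∀ᶠ n in atTop,
      b n ≤ C * min (Real.sqrt n / ξ n) ((ξ n * η n)⁻¹) := by
  obtain ⟨M, hM0, hev⟩ := hbdd (1/10000) (by norm_num)
  refine ⟨60 * M, ?_⟩
  have hs0ev : ∀ᶠ n in atTop, ξ n / Real.sqrt n < 1/8 :=
    hxn.eventually_lt_const (by norm_num)
  have hxeev : ∀ᶠ n in atTop, ξ n * η n < 1/8 :=
    hxe.eventually_lt_const (by norm_num)
  filter_upwards [hev, hs0ev, hxeev, eventually_ge_atTop 2] with n hevn hs08 hxe8 hn2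
  -- setup
  set m := n - k n with hmdef
  have hm : 1 ≤ m := by
    have h2 := (hk n hn2).2
    omega
  have hξn := hξ n
  have hηn := hη n
  have hn0 : (0:ℝ) < (n:ℝ) := by
    have : (2:ℝ) ≤ (n:ℝ) := by exact_mod_cast hn2
    linarith
  have hsqn : (0:ℝ) < Real.sqrt n := Real.sqrt_pos.2 hn0
  set s0 := ξ n / Real.sqrt n with hs0def
  have hs0 : 0 < s0 := div_pos hξn hsqn
  set w := ξ n * η n with hwdef
  have hw : 0 < w := by rw [hwdef]; positivity
  set v : ℝ≥0 := Real.toNNReal ((1:ℝ) ^ 2 * ξ n ^ 2 / n) with hvdef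
  have hvval : (v : ℝ) = s0 ^ 2 := by
    rw [hvdef, Real.coe_toNNReal _ (by positivity), hs0def, div_pow, Real.sq_sqrt hn0.le]
    ring
  have hvne : v ≠ 0 := by
    intro hcontr
    have h0 : (v:ℝ) = 0 := by rw [hcontr]; simp
    rw [hvval] at h0
    nlinarith
  have hsvs0 : Real.sqrt (v:ℝ) = s0 := by rw [hvval, Real.sqrt_sq hs0.le]
  haveI : IsFiniteMeasure (nu m) := ⟨by rw [nu_univ hm]; exact ENNReal.one_lt_top⟩
  have hjm : ∀ θ0 : ℝ, jointMeas n m (ξ n) θ0 1 = (gaussianReal θ0 v).prod (nu m) := fun _ => rfl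
  -- Claim 1 : b n * s0 ≤ M
  have claim1 : b n * s0 ≤ M := by
    by_contra hcon
    push_neg at hcon
    have hbpos : 0 < b n := by
      rcases (hb n).eq_or_lt with h | h
      · exfalso; rw [← h] at hcon; simp at hcon; linarith
      · exact h
    set t : ℝ := (4 * w)⁻¹ with htdef
    have ht : 0 < t := by
      rw [htdef]
      exact inv_pos.2 (by linarith)
    set A : Set ℝ := Ioo (1 - 2*s0) (1 - s0) with hAdef
    set B : Set ℝ := Icc 0 t with hBdef
    have hA : ENNReal.ofReal (1/27) ≤ gaussianReal 1 v A := by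
      have hd : ∀ x ∈ Ioo (1 - 2*s0) (1 - s0), (x - 1)^2 ≤ 4 * (v:ℝ) := by
        intro x hx
        obtain ⟨h1, h2⟩ := hx
        rw [hvval]
        nlinarith
      have hgl := gauss_lb hvne 1 (1 - 2*s0) (1 - s0) (by linarith) hd
      rw [hsvs0] at hgl
      have harith : ((1 - s0) - (1 - 2*s0)) / (27 * s0) = 1/27 := by
        rw [show ((1:ℝ) - s0) - (1 - 2*s0) = s0 by ring]
        rw [div_eq_div_iff (by linarith) (by norm_num)]
        ring
      rwa [harith] at hgl
    have hB : ENNReal.ofReal (1/2) ≤ nu m B := by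
      have h1 : 1 - ENNReal.ofReal (1/t^2) ≤ nu m B := nu_Icc_ge hm ht
      have h2 : (1:ℝ)/t^2 ≤ 1/4 := by
        have ht2 : t^2 = (16 * w^2)⁻¹ := by
          rw [htdef, inv_pow]
          congr 1
          ring
        rw [ht2, one_div, inv_inv]
        nlinarith
      calc ENNReal.ofReal (1/2) ≤ 1 - ENNReal.ofReal (1/4) := by
            rw [← ENNReal.ofReal_one, ← ENNReal.ofReal_sub _ (by norm_num)]
            apply ENNReal.ofReal_le_ofReal
            norm_num
        _ ≤ 1 - ENNReal.ofReal (1/t^2) :=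
            tsub_le_tsub_left (ENNReal.ofReal_le_ofReal h2) 1
        _ ≤ nu m B := h1
    have hincl : A ×ˢ B ⊆ {p : ℝ × ℝ | 1 * M < b n * |T 1 (ξ n) (η n) p - 1|} := by
      rintro ⟨z, y⟩ ⟨hzA, hyB⟩
      simp only [mem_setOf_eq, one_mul]
      have hzA' : z ∈ Ioo (1 - 2*s0) (1 - s0) := hzA
      have hyB' : y ∈ Icc 0 t := hyB
      obtain ⟨hz1, hz2⟩ := hzA'
      obtain ⟨hy0, hyt⟩ := hyB'
      have hτ0 : 0 ≤ 1 * y * ξ n * η n :=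
        mul_nonneg (mul_nonneg (mul_nonneg zero_le_one hy0) hξn.le) hηn.le
      have hτ : 1 * y * ξ n * η n ≤ 1/4 := by
        have h1 : 1 * y * ξ n * η n = y * w := by rw [hwdef]; ring
        have h2 : y * w ≤ t * w := mul_le_mul_of_nonneg_right hyt hw.le
        have h3 : t * w = 1/4 := by
          rw [htdef]
          field_simp
        linarith
      have hzlow : 3/4 < z := by linarith
      have hzhi : z < 1 := by linarith
      have hzpos : 0 < z := by linarith
      have habs : s0 < |T 1 (ξ n) (η n) (z,y) - 1| := by
        have habsz : |z| = z := abs_of_pos hzpos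
        rcases hT with h | h | h <;> subst h
        · rw [hardF]
          simp only
          rw [if_pos (by rw [habsz]; linarith)]
          rw [abs_of_neg (by linarith : z - 1 < 0)]
          linarith
        · rw [softF]
          simp only
          rw [Real.sign_of_pos hzpos, habsz, one_mul,
            max_eq_left (by linarith : (0:ℝ) ≤ z - 1 * y * ξ n * η n)]
          rw [abs_of_neg (by linarith : z - 1 * y * ξ n * η n - 1 < 0)]
          linarith
        · rw [adaptF]
          simp only
          rw [if_neg hzpos.ne']
          have hfrac : (1 * y * ξ n * η n)^2 / z^2 ≤ 1/4 := by
            rw [div_le_iff₀ (pow_pos hzpos 2)]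
            nlinarith
          rw [max_eq_left (by linarith : (0:ℝ) ≤ 1 - (1 * y * ξ n * η n)^2 / z^2)]
          have hTexp : z * (1 - (1 * y * ξ n * η n)^2 / z^2) - 1
              = (z - 1) - (1 * y * ξ n * η n)^2 / z := by
            field_simp
            ring
          rw [hTexp]
          have hfr0 : 0 ≤ (1 * y * ξ n * η n)^2 / z := div_nonneg (sq_nonneg _) hzpos.le
          rw [abs_of_neg (by linarith : (z - 1) - (1 * y * ξ n * η n)^2 / z < 0)]
          linarith
      calc M < b n * s0 := hcon
        _ < b n * |T 1 (ξ n) (η n) (z,y) - 1| := mul_lt_mul_of_pos_left habs hbpos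
    have hlow : ENNReal.ofReal (1/54)
        ≤ jointMeas n m (ξ n) 1 1 {p : ℝ × ℝ | 1 * M < b n * |T 1 (ξ n) (η n) p - 1|} := by
      calc ENNReal.ofReal (1/54) = ENNReal.ofReal (1/27) * ENNReal.ofReal (1/2) := by
            rw [← ENNReal.ofReal_mul (by norm_num)]
            norm_num
        _ ≤ gaussianReal 1 v A * nu m B := mul_le_mul' hA hB
        _ = jointMeas n m (ξ n) 1 1 (A ×ˢ B) := by
            rw [hjm 1, Measure.prod_prod]
        _ ≤ _ := measure_mono hincl
    have hup := hevn 1 1 one_pos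
    have hcontr := lt_of_le_of_lt hlow hup
    rw [ENNReal.ofReal_lt_ofReal_iff (by norm_num)] at hcontr
    norm_num at hcontr
  -- Claim 2
  have claim2 : s0 ≤ w → b n * w ≤ 60 * M := by
    intro hcase
    by_contra hcon
    push_neg at hcon
    have hbpos : 0 < b n := by
      rcases (hb n).eq_or_lt with h | h
      · exfalso; rw [← h] at hcon; simp at hcon; nlinarith
      · exact h
    set θ0 : ℝ := w/60 with hθ0def
    set r' : ℝ := min (w/120) s0 with hr'def
    have hr' : 0 < r' := lt_min (by linarith) hs0
    have hr's0 : r' ≤ s0 := min_le_right _ _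
    have hrle : r' ≤ w/120 := min_le_left _ _
    have hr'low : s0/120 ≤ r' := by
      apply le_min
      · linarith
      · linarith
    set A : Set ℝ := Ioo (θ0 - r') (θ0 + r') with hAdef
    set B : Set ℝ := Ici (1/15 : ℝ) with hBdef
    have hA : ENNReal.ofReal (1/1620) ≤ gaussianReal θ0 v A := by
      have hd : ∀ x ∈ Ioo (θ0 - r') (θ0 + r'), (x - θ0)^2 ≤ 4 * (v:ℝ) := by
        intro x hx
        obtain ⟨h1, h2⟩ := hx
        rw [hvval]
        nlinarith
      have hgl := gauss_lb hvne θ0 (θ0 - r') (θ0 + r') (by linarith) hd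
      rw [hsvs0] at hgl
      refine le_trans (ENNReal.ofReal_le_ofReal ?_) hgl
      rw [show (θ0 + r') - (θ0 - r') = 2 * r' by ring]
      rw [div_le_div_iff₀ (by norm_num) (by positivity)]
      linarith
    have hB : ENNReal.ofReal (1/2) ≤ nu m B := nu_Ici_ge hm
    have hincl : A ×ˢ B ⊆ {p : ℝ × ℝ | 1 * M < b n * |T 1 (ξ n) (η n) p - θ0|} := by
      rintro ⟨z, y⟩ ⟨hzA, hyB⟩
      simp only [mem_setOf_eq, one_mul]
      have hzA' : z ∈ Ioo (θ0 - r') (θ0 + r') := hzA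
      obtain ⟨hz1, hz2⟩ := hzA'
      have hy15 : (1/15 : ℝ) ≤ y := hyB
      have hτlow : w/15 ≤ 1 * y * ξ n * η n := by
        have h1 : 1 * y * ξ n * η n = y * w := by rw [hwdef]; ring
        have h2 : w/15 = (1/15) * w := by ring
        have h3 : (1/15 : ℝ) * w ≤ y * w := mul_le_mul_of_nonneg_right hy15 hw.le
        linarith
      have hzpos : 0 < z := by
        have : w/60 - w/120 ≤ θ0 - r' := by
          rw [hθ0def]
          linarith
        have hpos : 0 < w/60 - w/120 := by linarith
        linarith
      have hzhi : z < w/30 := by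
        have : θ0 + r' ≤ w/60 + w/120 := by
          rw [hθ0def]
          linarith
        have : w/60 + w/120 ≤ w/30 := by linarith
        linarith
      have habsz : |z| = z := abs_of_pos hzpos
      have hzτ : z < 1 * y * ξ n * η n := by
        have : w/30 < w/15 := by linarith
        linarith
      have hT0 : T 1 (ξ n) (η n) (z,y) = 0 := by
        rcases hT with h | h | h <;> subst h
        · rw [hardF]
          simp only
          rw [if_neg (by rw [habsz]; linarith)]
        · rw [softF]
          simp only
          rw [max_eq_right (by rw [habsz]; linarith : |z| - 1 * y * ξ n * η n ≤ 0)]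
          ring
        · rw [adaptF]
          simp only
          rw [if_neg hzpos.ne']
          have hle : 1 - (1 * y * ξ n * η n)^2 / z^2 ≤ 0 := by
            have hd1 : 1 ≤ (1 * y * ξ n * η n)^2 / z^2 := by
              rw [le_div_iff₀ (pow_pos hzpos 2)]
              nlinarith
            linarith
          rw [max_eq_right hle]
          ring
      rw [hT0]
      have habs0 : |(0:ℝ) - θ0| = θ0 := by
        rw [zero_sub, abs_neg, abs_of_pos (by rw [hθ0def]; linarith)]
      rw [habs0, hθ0def]
      have hgoal : b n * (w/60) = b n * w / 60 := by ring
      rw [hgoal]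
      linarith
    have hlow : ENNReal.ofReal (1/3240)
        ≤ jointMeas n m (ξ n) θ0 1 {p : ℝ × ℝ | 1 * M < b n * |T 1 (ξ n) (η n) p - θ0|} := by
      calc ENNReal.ofReal (1/3240) = ENNReal.ofReal (1/1620) * ENNReal.ofReal (1/2) := by
            rw [← ENNReal.ofReal_mul (by norm_num)]
            norm_num
        _ ≤ gaussianReal θ0 v A * nu m B := mul_le_mul' hA hB
        _ = jointMeas n m (ξ n) θ0 1 (A ×ˢ B) := by
            rw [hjm θ0, Measure.prod_prod]
        _ ≤ _ := measure_mono hincl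
    have hup := hevn θ0 1 one_pos
    have hcontr := lt_of_le_of_lt hlow hup
    rw [ENNReal.ofReal_lt_ofReal_iff (by norm_num)] at hcontr
    norm_num at hcontr
  -- combine
  rcases le_total (Real.sqrt n / ξ n) (w⁻¹) with hmin | hmin
  · rw [min_eq_left hmin]
    have h1 : b n ≤ M / s0 := (le_div_iff₀ hs0).2 claim1
    have h2 : M / s0 = M * (Real.sqrt n / ξ n) := by
      rw [hs0def]
      field_simp
    have h3 : M * (Real.sqrt n / ξ n) ≤ 60 * M * (Real.sqrt n / ξ n) := by
      apply mul_le_mul_of_nonneg_right _ (by positivity)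
      linarith
    linarith
  · rw [min_eq_right hmin]
    have hcase : s0 ≤ w := by
      by_contra hlt
      push_neg at hlt
      have hinv : s0⁻¹ < w⁻¹ := by
        exact inv_strictAnti₀ hw hlt
      have hs0inv : s0⁻¹ = Real.sqrt n / ξ n := by
        rw [hs0def, inv_div]
      rw [hs0inv] at hinv
      linarith
    have h1 := claim2 hcase
    have h2 : b n ≤ 60 * M / w := (le_div_iff₀ hw).2 h1
    rw [div_eq_mul_inv] at h2
    exact h2
end

section
/- Fix n ≥ 1, θ ∈ ℝ, σ > 0, ξ > 0, η > 0 and a scaling factor α > 0. Let Z be a real random variable with Gaussian law N(θ, σ²ξ²/n) and let θ̂_H = Z·1(|Z| > σξη) be the hard-thresholding estimator. Then for every x ∈ ℝ, P(σ^{−1}α(θ̂_H − θ) ≤ x) = Φ(n^{1/2} x/(α ξ))·1(|x/α + θ/σ| > ξη) + Φ(n^{1/2}(−θ/(σξ) + η))·1(0 ≤ x/α + θ/σ ≤ ξη) + Φ(n^{1/2}(−θ/(σξ) − η))·1(−ξη ≤ x/α + θ/σ < 0). -/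
open MeasureTheory ProbabilityTheory Filter Set
open scoped NNReal

lemma gauss_std_Iic (t : ℝ) : ((gaussianReal 0 1 (Iic t)).toReal = Phi t) := by
  rw [gaussianReal_apply_eq_integral 0 one_ne_zero (Iic t)]
  rw [ENNReal.toReal_ofReal]
  · unfold Phi
    congr 1
    ext x
    unfold gaussianPDFReal
    norm_num
  · exact setIntegral_nonneg measurableSet_Iic fun y _ => gaussianPDFReal_nonneg 0 1 y

lemma gauss_map (μ : ℝ) (v : ℝ≥0) (hv : v ≠ 0) :
    gaussianReal μ v = (gaussianReal 0 1).map (fun x => Real.sqrt v * x + μ) := by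
  have h1 : (gaussianReal 0 1).map (fun x => Real.sqrt v * x) = gaussianReal 0 v := by
    rw [show (fun x => Real.sqrt v * x) = (fun x => (Real.sqrt v) * x) from rfl,
      gaussianReal_map_const_mul]
    congr 1
    · simp
    · ext
      simp [Real.sq_sqrt v.coe_nonneg]
  have h2 : (fun x => Real.sqrt v * x + μ) = (fun x => x + μ) ∘ (fun x => Real.sqrt v * x) := rfl
  rw [h2, ← Measure.map_map (by fun_prop) (by fun_prop), h1, gaussianReal_map_add_const, zero_add]

lemma gauss_Iic (μ : ℝ) (v : ℝ≥0) (hv : v ≠ 0) (a : ℝ) :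
    (gaussianReal μ v (Iic a)).toReal = Phi ((a - μ) / Real.sqrt v) := by
  have hv' : (0:ℝ) < Real.sqrt v := Real.sqrt_pos.mpr
    (lt_of_le_of_ne v.coe_nonneg (by exact_mod_cast (Ne.symm hv)))
  rw [gauss_map μ v hv, Measure.map_apply (by fun_prop) measurableSet_Iic]
  have : (fun x => Real.sqrt v * x + μ) ⁻¹' Iic a = Iic ((a - μ) / Real.sqrt v) := by
    ext y
    simp only [mem_preimage, mem_Iic]
    rw [le_div_iff₀ hv']
    constructor <;> intro h <;> nlinarith
  rw [this, gauss_std_Iic]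

lemma gauss_Iio (μ : ℝ) (v : ℝ≥0) (hv : v ≠ 0) (a : ℝ) :
    (gaussianReal μ v (Iio a)).toReal = Phi ((a - μ) / Real.sqrt v) := by
  have hsing : gaussianReal μ v {a} = 0 :=
    gaussianReal_absolutelyContinuous μ hv (measure_singleton a)
  rw [measure_congr (Iio_ae_eq_Iic' hsing), gauss_Iic μ v hv a]

set_option maxHeartbeats 1000000 in
/-- finite-sample cdf of the scaled and centered infeasible
hard-thresholding estimator. -/
theorem stmt_10 (n : ℕ) (hn : 1 ≤ n) (θ σ ξ η α : ℝ)
    (hσ : 0 < σ) (hξ : 0 < ξ) (hη : 0 < η) (hα : 0 < α) (x : ℝ) :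
    (gaussianReal θ (Real.toNNReal (σ ^ 2 * ξ ^ 2 / n))
        {z : ℝ | σ⁻¹ * α * ((if σ * ξ * η < |z| then z else 0) - θ) ≤ x}).toReal =
      Phi (Real.sqrt n * x / (α * ξ)) *
          (if ξ * η < |x / α + θ / σ| then 1 else 0)
        + Phi (Real.sqrt n * (-θ / (σ * ξ) + η)) *
          (if 0 ≤ x / α + θ / σ ∧ x / α + θ / σ ≤ ξ * η then 1 else 0)
        + Phi (Real.sqrt n * (-θ / (σ * ξ) - η)) *
          (if -(ξ * η) ≤ x / α + θ / σ ∧ x / α + θ / σ < 0 then 1 else 0) := by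
  have hn' : (0:ℝ) < n := by exact_mod_cast hn
  have hτ : 0 < σ * ξ * η := by positivity
  have hsn : (0:ℝ) < Real.sqrt n := Real.sqrt_pos.mpr hn'
  set v : ℝ≥0 := Real.toNNReal (σ ^ 2 * ξ ^ 2 / n) with hvdef
  have hvr : (v:ℝ) = σ ^ 2 * ξ ^ 2 / n := Real.coe_toNNReal _ (by positivity)
  have hv : v ≠ 0 := by
    intro h
    have : (v:ℝ) = 0 := by exact_mod_cast h
    rw [hvr] at this
    have : (0:ℝ) < σ ^ 2 * ξ ^ 2 / n := by positivity
    linarith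
  have hsv : Real.sqrt (v:ℝ) = σ * ξ / Real.sqrt n := by
    rw [hvr, show σ ^ 2 * ξ ^ 2 / (n:ℝ) = (σ * ξ / Real.sqrt n) ^ 2 by
      rw [div_pow, Real.sq_sqrt hn'.le]; ring]
    exact Real.sqrt_sq (by positivity)
  set u : ℝ := x / α + θ / σ with hudef
  have key : ∀ t : ℝ, (σ⁻¹ * α * (t - θ) ≤ x ↔ t ≤ σ * u) := by
    intro t
    rw [mul_comm, ← le_div_iff₀ (by positivity : (0:ℝ) < σ⁻¹ * α), sub_le_iff_le_add,
      show x / (σ⁻¹ * α) + θ = σ * u by rw [hudef]; field_simp]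
  have hxu : σ * u - θ = σ * x / α := by rw [hudef]; field_simp; ring
  by_cases h1 : ξ * η < |u|
  · -- event = Iic (σ * u)
    have hset : {z : ℝ | σ⁻¹ * α * ((if σ * ξ * η < |z| then z else 0) - θ) ≤ x}
        = Iic (σ * u) := by
      ext z
      simp only [mem_setOf_eq, key, mem_Iic]
      rcases lt_abs.mp h1 with hu | hu
      · -- u > ξη, σu > σξη
        have hσu : σ * ξ * η < σ * u := by nlinarith
        constructor
        · intro h
          by_cases hz : σ * ξ * η < |z|
          · simpa [hz] using h
          · push_neg at hz
            have := le_abs_self z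
            simp [if_neg (not_lt.mpr hz)] at h ⊢
            linarith
        · intro h
          split_ifs with hz
          · exact h
          · nlinarith
      · -- u < -ξη
        have hσu : σ * u < -(σ * ξ * η) := by nlinarith
        constructor
        · intro h
          by_cases hz : σ * ξ * η < |z|
          · simpa [hz] using h
          · simp [if_neg hz] at h
            nlinarith
        · intro h
          have hz : σ * ξ * η < |z| := by
            have := neg_abs_le z
            nlinarith
          simpa [hz] using h
    rw [hset, gauss_Iic θ v hv]
    have hPhi : (σ * u - θ) / Real.sqrt (v:ℝ) = Real.sqrt n * x / (α * ξ) := by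
      rw [hxu, hsv]; field_simp
    have h2 : ¬ (0 ≤ u ∧ u ≤ ξ * η) := by
      rcases lt_abs.mp h1 with hu | hu
      · exact fun h => absurd h.2 (not_le.mpr hu)
      · exact fun h => by linarith
    have h3 : ¬ (-(ξ * η) ≤ u ∧ u < 0) := by
      rcases lt_abs.mp h1 with hu | hu
      · exact fun h => absurd h.2 (not_lt.mpr (by nlinarith))
      · exact fun h => by linarith
    rw [hPhi]
    simp [h1, h2, h3]
  · push_neg at h1
    have habs := abs_le.mp h1
    by_cases h0 : 0 ≤ u
    · -- event = Iic (σξη)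
      have hset : {z : ℝ | σ⁻¹ * α * ((if σ * ξ * η < |z| then z else 0) - θ) ≤ x}
          = Iic (σ * ξ * η) := by
        ext z
        simp only [mem_setOf_eq, key, mem_Iic]
        have hσu : 0 ≤ σ * u := by positivity
        have hσu2 : σ * u ≤ σ * ξ * η := by nlinarith [habs.2]
        constructor
        · intro h
          by_cases hz : σ * ξ * η < |z|
          · simp [hz] at h
            linarith
          · push_neg at hz
            have := le_abs_self z
            linarith
        · intro h
          split_ifs with hz
          · have := neg_abs_le z
            have : z < -(σ * ξ * η) := by
              rcases abs_cases z with ⟨h3, _⟩ | ⟨h3, _⟩ <;> [linarith; linarith]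
            linarith
          · linarith
      rw [hset, gauss_Iic θ v hv]
      have hPhi : (σ * ξ * η - θ) / Real.sqrt (v:ℝ)
          = Real.sqrt n * (-θ / (σ * ξ) + η) := by
        rw [hsv]; field_simp; ring
      have h2 : ¬ ξ * η < |u| := not_lt.mpr h1
      have h3 : ¬ (-(ξ * η) ≤ u ∧ u < 0) := fun h => absurd h.2 (not_lt.mpr h0)
      rw [hPhi]
      simp [h2, h3, h0, habs.2]
    · -- u < 0 : event = Iio (-(σξη))
      push_neg at h0
      have hset : {z : ℝ | σ⁻¹ * α * ((if σ * ξ * η < |z| then z else 0) - θ) ≤ x}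
          = Iio (-(σ * ξ * η)) := by
        ext z
        simp only [mem_setOf_eq, key, mem_Iio]
        have hσu : σ * u < 0 := by
          have := mul_pos hσ (neg_pos.mpr h0); linarith
        have hσu2 : -(σ * ξ * η) ≤ σ * u := by nlinarith [habs.1]
        constructor
        · intro h
          by_cases hz : σ * ξ * η < |z|
          · simp [hz] at h
            have := neg_abs_le z
            rcases abs_cases z with ⟨h3, _⟩ | ⟨h3, _⟩
            · nlinarith
            · linarith
          · simp [if_neg hz] at h
            linarith
        · intro h
          have hz : σ * ξ * η < |z| := by
            have := neg_abs_le z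
            nlinarith
          simp [hz]
          linarith
      rw [hset, gauss_Iio θ v hv]
      have hPhi : (-(σ * ξ * η) - θ) / Real.sqrt (v:ℝ)
          = Real.sqrt n * (-θ / (σ * ξ) - η) := by
        rw [hsv]; field_simp; ring
      have h2 : ¬ ξ * η < |u| := not_lt.mpr h1
      have h3 : ¬ (0 ≤ u ∧ u ≤ ξ * η) := fun h => absurd h.1 (not_le.mpr h0)
      rw [hPhi]
      simp [h2, h3, h0, habs.1]
end

section
/- Fix n ≥ 1, θ ∈ ℝ, σ > 0, ξ > 0, η > 0 and a scaling factor α > 0. Let Z be a real random variable with Gaussian law N(θ, σ²ξ²/n) and let θ̂_AS = Z(1 − σ²ξ²η²/Z²)_+ (with θ̂_AS = 0 when Z = 0) be the adaptive soft-thresholding estimator, where (·)_+ = max(·, 0). Define z^{(2)}(x, y) = 0.5 n^{1/2} ξ^{−1}(x/α − θ/σ) + n^{1/2} √((0.5 ξ^{−1}(x/α + θ/σ))² + y²) and z^{(1)}(x, y) = 0.5 n^{1/2} ξ^{−1}(x/α − θ/σ) − n^{1/2} √((0.5 ξ^{−1}(x/α + θ/σ))² + y²). Then for every x ∈ ℝ,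 P(σ^{−1}α(θ̂_AS − θ) ≤ x) = Φ(z^{(2)}(x, η))·1(x/α + θ/σ ≥ 0) + Φ(z^{(1)}(x, η))·1(x/α + θ/σ < 0). -/
open MeasureTheory ProbabilityTheory Filter Set

lemma std_cdf (z : ℝ) : (gaussianReal 0 1 (Iic z)).toReal = Phi z := by
  rw [gaussianReal_apply_eq_integral 0 one_ne_zero,
    ENNReal.toReal_ofReal (integral_nonneg fun t => gaussianPDFReal_nonneg _ _ _)]
  · unfold Phi gaussianPDFReal
    congr 1
    ext t
    norm_num

lemma gauss_cdf (μ s : ℝ) (hs : 0 < s) (g : ℝ) :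
    (gaussianReal μ (Real.toNNReal (s^2)) (Iic g)).toReal = Phi ((g - μ)/s) := by
  have hmap : gaussianReal μ (Real.toNNReal (s^2)) =
      ((gaussianReal 0 1).map (s * ·)).map (· + μ) := by
    rw [gaussianReal_map_const_mul, gaussianReal_map_add_const]
    congr 1
    · ring
    · ext
      simp [Real.coe_toNNReal _ (sq_nonneg s)]
  rw [hmap, Measure.map_apply (measurable_add_const μ) measurableSet_Iic]
  have h1 : (· + μ) ⁻¹' Iic g = Iic (g - μ) := by
    ext y; simp [le_sub_iff_add_le]
  rw [h1, Measure.map_apply (measurable_const_mul s) measurableSet_Iic]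
  have h2 : (s * ·) ⁻¹' Iic (g - μ) = Iic ((g - μ)/s) := by
    ext y; simp [le_div_iff₀ hs, mul_comm]
  rw [h2, std_cdf]

lemma thresh_iff (c t g z : ℝ) (hc : 0 < c) (heq : g^2 - t*g - c^2 = 0)
    (hsign : (0 ≤ t ∧ c ≤ g) ∨ (t < 0 ∧ g ≤ -c)) :
    ((if z = 0 then 0 else z * max (1 - c^2/z^2) 0) ≤ t ↔ z ≤ g) := by
  have hg0 : g ≠ 0 := by rcases hsign with ⟨ht, hg⟩ | ⟨ht, hg⟩ <;> nlinarith
  constructor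
  · intro h
    by_contra hz
    push_neg at hz  -- g < z
    rcases hsign with ⟨ht, hg⟩ | ⟨ht, hg⟩
    · -- 0 ≤ t, c ≤ g, so z > g ≥ c > 0
      have hzpos : 0 < z := by linarith
      have hz0 : z ≠ 0 := ne_of_gt hzpos
      rw [if_neg hz0] at h
      have hmax : max (1 - c^2/z^2) 0 = 1 - c^2/z^2 := by
        rw [max_eq_left]
        rw [sub_nonneg, div_le_one (by positivity)]
        nlinarith
      rw [hmax] at h
      have : z * (1 - c^2/z^2) = (z^2 - c^2)/z := by field_simp
      rw [this, div_le_iff₀ hzpos] at h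
      have hgpos : 0 < g := lt_of_lt_of_le hc hg
      nlinarith [mul_le_mul_of_nonneg_left h hgpos.le,
        mul_pos (sub_pos.2 hz) (mul_pos hgpos hzpos),
        mul_pos (sub_pos.2 hz) (pow_pos hc 2)]
    · -- t < 0, g ≤ -c
      rcases eq_or_ne z 0 with rfl | hz0
      · rw [if_pos rfl] at h; linarith
      rw [if_neg hz0] at h
      rcases le_or_gt (1 - c^2/z^2) 0 with hm | hm
      · rw [max_eq_right hm] at h; simp at h; linarith
      · have hmax : max (1 - c^2/z^2) 0 = 1 - c^2/z^2 := max_eq_left hm.le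
        rw [hmax] at h
        have hz2 : c^2 < z^2 := by
          rw [sub_pos, div_lt_one (by positivity)] at hm; exact hm
        rcases lt_or_gt_of_ne hz0 with hneg | hpos
        · -- z < 0, z² > c² so z < -c; g < z < 0
          have : z * (1 - c^2/z^2) = (z^2 - c^2)/z := by field_simp
          rw [this, div_le_iff_of_neg hneg] at h
          have hgneg : g < 0 := by linarith
          nlinarith [mul_pos (neg_pos.2 hneg) (neg_pos.2 hgneg)]
        · -- z > 0: T = z(1-c²/z²) > 0 > t
          have : 0 < z * (1 - c^2/z^2) := mul_pos hpos hm
          linarith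
  · intro hz
    rcases eq_or_ne z 0 with rfl | hz0
    · rw [if_pos rfl]
      rcases hsign with ⟨ht, hg⟩ | ⟨ht, hg⟩
      · exact ht
      · exfalso; nlinarith
    rw [if_neg hz0]
    rcases le_or_gt (1 - c^2/z^2) 0 with hm | hm
    · rw [max_eq_right hm, mul_zero]
      rcases hsign with ⟨ht, hg⟩ | ⟨ht, hg⟩
      · exact ht
      · exfalso
        -- z ≤ g ≤ -c < 0 so z² ≥ c², contradicting 1 - c²/z² ≤ 0? no: z² ≥ c² gives 1-c²/z² ≥ 0, both could be 0
        have hzneg : z < 0 := by nlinarith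
        rw [sub_nonpos, le_div_iff₀ (by positivity)] at hm
        -- z² = c² means 1 - c²/z² = 0, T = 0, need 0 ≤ t but t < 0. But then z = -c, g ≤ -c ≤ ... need contradiction
        have hz2 : z^2 = c^2 := by nlinarith
        have : z = -c := by nlinarith
        have : g = -c := by nlinarith
        nlinarith
    · rw [max_eq_left hm.le]
      have hz2 : c^2 < z^2 := by
        rw [sub_pos, div_lt_one (by positivity)] at hm; exact hm
      have hT : z * (1 - c^2/z^2) = (z^2 - c^2)/z := by field_simp
      rw [hT]
      rcases hsign with ⟨ht, hg⟩ | ⟨ht, hg⟩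
      · rcases lt_or_gt_of_ne hz0 with hneg | hpos
        · rw [div_le_iff_of_neg hneg]; nlinarith
        · rw [div_le_iff₀ hpos]
          have hgpos : 0 < g := by linarith
          nlinarith [mul_pos hpos hgpos]
      · have hzneg : z < 0 := by nlinarith
        rw [div_le_iff_of_neg hzneg]
        have hgneg : g < 0 := by linarith
        nlinarith [mul_pos (neg_pos.2 hzneg) (neg_pos.2 hgneg)]

set_option maxHeartbeats 1000000 in
/-- finite-sample cdf of the scaled and centered infeasible adaptive
soft-thresholding estimator. -/
theorem stmt_12 (n : ℕ) (hn : 1 ≤ n) (θ σ ξ η α : ℝ)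
    (hσ : 0 < σ) (hξ : 0 < ξ) (hη : 0 < η) (hα : 0 < α) (x : ℝ) :
    (gaussianReal θ (Real.toNNReal (σ ^ 2 * ξ ^ 2 / n))
        {z : ℝ | σ⁻¹ * α *
          ((if z = 0 then 0 else z * max (1 - (σ * ξ * η) ^ 2 / z ^ 2) 0) - θ) ≤ x}).toReal =
      Phi (0.5 * Real.sqrt n * ξ⁻¹ * (x / α - θ / σ) +
            Real.sqrt n * Real.sqrt ((0.5 * ξ⁻¹ * (x / α + θ / σ)) ^ 2 + η ^ 2)) *
          (if 0 ≤ x / α + θ / σ then 1 else 0)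
        + Phi (0.5 * Real.sqrt n * ξ⁻¹ * (x / α - θ / σ) -
            Real.sqrt n * Real.sqrt ((0.5 * ξ⁻¹ * (x / α + θ / σ)) ^ 2 + η ^ 2)) *
          (if x / α + θ / σ < 0 then 1 else 0) := by
  have hn0 : (0:ℝ) < n := by exact_mod_cast Nat.lt_of_lt_of_le Nat.zero_lt_one hn
  have hsn : 0 < Real.sqrt n := Real.sqrt_pos.2 hn0
  set s : ℝ := σ * ξ / Real.sqrt n with hs_def
  have hs : 0 < s := by positivity
  have hvar : σ ^ 2 * ξ ^ 2 / (n:ℝ) = s ^ 2 := by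
    rw [hs_def, div_pow, mul_pow, Real.sq_sqrt hn0.le]
  set a : ℝ := x / α + θ / σ with ha_def
  set b : ℝ := x / α - θ / σ with hb_def
  set R : ℝ := Real.sqrt ((0.5 * ξ⁻¹ * a) ^ 2 + η ^ 2) with hR_def
  have hRpos : 0 < R := Real.sqrt_pos.2 (by positivity)
  have hR2 : R ^ 2 = (0.5 * ξ⁻¹ * a) ^ 2 + η ^ 2 := Real.sq_sqrt (by positivity)
  have hR2' : ξ ^ 2 * R ^ 2 = a ^ 2 / 4 + ξ ^ 2 * η ^ 2 := by
    rw [hR2]; field_simp; ring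
  set A : ℝ := 0.5 * Real.sqrt n * ξ⁻¹ * b with hA_def
  set B : ℝ := Real.sqrt n * R with hB_def
  set t : ℝ := θ + σ * (x / α) with ht_def
  set c : ℝ := σ * ξ * η with hc_def
  have hc : 0 < c := by positivity
  clear_value s a b R A B t c
  have hsA : s * A = σ * b / 2 := by
    rw [hs_def, hA_def]; field_simp; ring
  have hsB : s * B = σ * ξ * R := by
    rw [hs_def, hB_def]; field_simp
  have hta : t = σ * a := by rw [ht_def, ha_def]; field_simp; ring
  have hθb : θ + σ * b / 2 = σ * a / 2 := by rw [ha_def, hb_def]; field_simp; ring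
  have hmem : ∀ T : ℝ, (σ⁻¹ * α * (T - θ) ≤ x ↔ T ≤ t) := by
    intro T
    rw [show σ⁻¹ * α * (T - θ) = (T - θ) * (α / σ) by field_simp,
      ← le_div_iff₀ (div_pos hα hσ),
      show x / (α / σ) = σ * (x / α) by field_simp,
      sub_le_iff_le_add, add_comm, ht_def]
  rcases le_or_gt 0 a with ha | ha
  · -- case a ≥ 0
    set g : ℝ := θ + s * (A + B) with hg_def
    have hgval : g = σ * a / 2 + σ * ξ * R := by
      rw [hg_def, mul_add, hsA, hsB, ← add_assoc, hθb]
    have heq : g ^ 2 - t * g - c ^ 2 = 0 := by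
      rw [hgval, hta, hc_def]
      linear_combination σ ^ 2 * hR2'
    have hRη : η ≤ R := by
      have h1 : η ^ 2 ≤ (0.5 * ξ⁻¹ * a) ^ 2 + η ^ 2 := by nlinarith [sq_nonneg (0.5 * ξ⁻¹ * a)]
      have h2 := Real.sqrt_le_sqrt h1
      rw [Real.sqrt_sq hη.le] at h2
      rw [hR_def]; exact h2
    have hsign : (0 ≤ t ∧ c ≤ g) ∨ (t < 0 ∧ g ≤ -c) := by
      left
      constructor
      · rw [hta]; positivity
      · rw [hgval, hc_def]
        nlinarith [mul_le_mul_of_nonneg_left hRη (mul_pos hσ hξ).le, mul_nonneg hσ.le ha]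
    have hset : {z : ℝ | σ⁻¹ * α *
        ((if z = 0 then 0 else z * max (1 - c ^ 2 / z ^ 2) 0) - θ) ≤ x} = Iic g := by
      ext z
      simp only [mem_setOf_eq, mem_Iic]
      rw [hmem, thresh_iff c t g z hc heq hsign]
    rw [hset, hvar, gauss_cdf θ s hs g, if_pos ha, if_neg (not_lt.2 ha), mul_one, mul_zero,
      add_zero, hg_def]
    congr 1
    field_simp
    ring
  · -- case a < 0
    set g : ℝ := θ + s * (A - B) with hg_def
    have hgval : g = σ * a / 2 - σ * ξ * R := by
      rw [hg_def, mul_sub, hsA, hsB, ← add_sub_assoc, hθb]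
    have heq : g ^ 2 - t * g - c ^ 2 = 0 := by
      rw [hgval, hta, hc_def]
      linear_combination σ ^ 2 * hR2'
    have hkey : a / 2 + ξ * η ≤ ξ * R := by
      rcases le_or_gt (a / 2 + ξ * η) 0 with h0 | h0
      · exact h0.trans (by positivity)
      · have hsq : (a / 2 + ξ * η) ^ 2 ≤ (ξ * R) ^ 2 := by
          nlinarith [hR2', mul_neg_of_neg_of_pos ha (mul_pos hξ hη)]
        have := Real.sqrt_le_sqrt hsq
        rwa [Real.sqrt_sq h0.le, Real.sqrt_sq (by positivity)] at this
    have hsign : (0 ≤ t ∧ c ≤ g) ∨ (t < 0 ∧ g ≤ -c) := by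
      right
      constructor
      · rw [hta]; exact mul_neg_of_pos_of_neg hσ ha
      · rw [hgval, hc_def]
        linarith [mul_le_mul_of_nonneg_left hkey hσ.le]
    have hset : {z : ℝ | σ⁻¹ * α *
        ((if z = 0 then 0 else z * max (1 - c ^ 2 / z ^ 2) 0) - θ) ≤ x} = Iic g := by
      ext z
      simp only [mem_setOf_eq, mem_Iic]
      rw [hmem, thresh_iff c t g z hc heq hsign]
    rw [hset, hvar, gauss_cdf θ s hs g, if_neg (not_le.2 ha), if_pos ha, mul_one, mul_zero,
      zero_add, hg_def]
    congr 1
    field_simp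
    ring
end
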